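/- arXiv:2007.11405 — 3 statements merged into one kernel-verified Lean document; each statement's English description precedes it below -/
import Mathlib

section
/- There exist a constant C > 0 and an integer K ≥ 7 such that for every integer k ≥ K, T_k^3 is integrable and |E[T_k^3] + 7√2/√k| ≤ C·k^{−3/2}; that is, E[T_k^3] = −7√2/√k + O(k^{−3/2}) as k → ∞. -/
open MeasureTheory ProbabilityTheory Real Finset Filter Set Topology
open scoped ENNReal NNReal


lemma gauss_laplace {t : ℝ} (ht : 0 ≤ t) :
    ∫ x, rexp (-(t * x ^ 2)) ∂(gaussianReal 0 1) = (Real.sqrt (1 + 2 * t))⁻¹ := by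
  rw [gaussianReal_of_var_ne_zero 0 one_ne_zero]
  have hpdf : gaussianPDF 0 1 = fun x => ((gaussianPDFReal 0 1 x).toNNReal : ℝ≥0∞) := by
    funext x; rfl
  rw [hpdf, integral_withDensity_eq_integral_smul
    ((measurable_gaussianPDFReal 0 1).real_toNNReal)]
  have : ∀ x : ℝ, (gaussianPDFReal 0 1 x).toNNReal • rexp (-(t * x ^ 2))
      = (Real.sqrt (2 * π))⁻¹ * rexp (-(t + 1/2) * x ^ 2) := by
    intro x
    rw [NNReal.smul_def, smul_eq_mul, Real.coe_toNNReal _ (gaussianPDFReal_nonneg 0 1 x),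
      gaussianPDFReal]
    simp only [NNReal.coe_one, mul_one, sub_zero]
    rw [mul_assoc, ← Real.exp_add]
    congr 2
    ring
  simp_rw [this]
  rw [integral_const_mul, integral_gaussian]
  rw [← Real.sqrt_inv, ← Real.sqrt_mul (by positivity)]
  congr 1
  have hπ : (0:ℝ) < π := Real.pi_pos
  field_simp
  rw [← Real.sqrt_mul (div_nonneg zero_le_one (by linarith)), add_comm (2*t) 1,
    one_div_mul_cancel (ne_of_gt (by linarith)), Real.sqrt_one]


lemma laplace_sum {Ω : Type*} [MeasurableSpace Ω] (μ : Measure Ω) [IsProbabilityMeasure μ]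
    (Z : ℕ → Ω → ℝ) (hmeas : ∀ i, Measurable (Z i))
    (hdist : ∀ i, Measure.map (Z i) μ = gaussianReal 0 1)
    (hindep : iIndepFun Z μ) (k : ℕ) {t : ℝ} (ht : 0 ≤ t) :
    ∫ ω, rexp (-(t * ∑ i ∈ Finset.range k, Z i ω ^ 2)) ∂μ
      = ((Real.sqrt (1 + 2 * t))⁻¹) ^ k := by
  have hX : iIndepFun (fun i => fun ω => Z i ω ^ 2) μ :=
    hindep.comp (fun _ x => x ^ 2) (fun _ => measurable_id.pow_const 2)
  have hXm : ∀ i, Measurable (fun ω => Z i ω ^ 2) := fun i => (hmeas i).pow_const 2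
  have hmgf := hX.mgf_sum (t := -t) hXm (Finset.range k)
  have h1 : ∀ i, mgf (fun ω => Z i ω ^ 2) μ (-t) = (Real.sqrt (1 + 2 * t))⁻¹ := by
    intro i
    rw [mgf]
    have : ∀ ω, rexp (-t * (Z i ω ^ 2)) = (fun x => rexp (-(t * x ^ 2))) (Z i ω) := by
      intro ω; simp [neg_mul]
    simp_rw [this]
    rw [← integral_map (hmeas i).aemeasurable
      (f := fun x : ℝ => rexp (-(t * x ^ 2))) (((continuous_const.mul (continuous_pow 2)).neg.rexp).aestronglyMeasurable), hdist i, gauss_laplace ht]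
  calc ∫ ω, rexp (-(t * ∑ i ∈ Finset.range k, Z i ω ^ 2)) ∂μ
      = mgf (∑ i ∈ Finset.range k, fun ω => Z i ω ^ 2) μ (-t) := by
        simp only [mgf]; congr 1; funext ω; simp [Finset.sum_apply, neg_mul]
    _ = ∏ i ∈ Finset.range k, mgf (fun ω => Z i ω ^ 2) μ (-t) := hmgf
    _ = ((Real.sqrt (1 + 2 * t))⁻¹) ^ k := by
        rw [Finset.prod_congr rfl (fun i _ => h1 i), Finset.prod_const, Finset.card_range]


lemma gamma_int (n : ℕ) : ∫ x in Ioi (0:ℝ), x ^ n * rexp (-x) = (n.factorial : ℝ) := by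
  calc ∫ x in Ioi (0:ℝ), x ^ n * rexp (-x)
      = ∫ x in Ioi (0:ℝ), rexp (-x) * x ^ ((n : ℝ) + 1 - 1) := by
        apply setIntegral_congr_fun measurableSet_Ioi
        intro x hx
        simp [Real.rpow_natCast, mul_comm]
    _ = (n.factorial : ℝ) := by
        rw [← Real.Gamma_eq_integral (by positivity), Real.Gamma_nat_eq_factorial]

lemma gamma_intOn (n : ℕ) : IntegrableOn (fun x : ℝ => x ^ n * rexp (-x)) (Ioi 0) := by
  apply (Real.GammaIntegral_convergent (s := (n:ℝ) + 1) (by positivity)).congr_fun _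
    measurableSet_Ioi
  intro x hx
  simp [Real.rpow_natCast, mul_comm]

lemma texp_integrable {s : ℝ} (hs : 0 < s) (n : ℕ) :
    IntegrableOn (fun t : ℝ => t ^ n * rexp (-(t * s))) (Ioi 0) := by
  have h2 : IntegrableOn (fun x : ℝ => (x * s) ^ n * rexp (-(x * s))) (Ioi 0) :=
    (integrableOn_Ioi_comp_mul_right_iff (fun y : ℝ => y ^ n * rexp (-y)) 0 hs).mpr
      (by rw [zero_mul]; exact gamma_intOn n)
  have h4 : IntegrableOn (fun x : ℝ => (x * s) ^ n * rexp (-(x * s)) / s ^ n) (Ioi 0) :=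
    h2.div_const (s ^ n)
  apply h4.congr_fun _ measurableSet_Ioi
  intro x hx
  field_simp
  ring

lemma texp_integral {s : ℝ} (hs : 0 < s) (n : ℕ) :
    ∫ t in Ioi 0, t ^ n * rexp (-(t * s)) = (n.factorial : ℝ) / s ^ (n + 1) := by
  have key := integral_comp_mul_right_Ioi (fun x : ℝ => (x / s) ^ n * rexp (-x)) 0 hs
  rw [zero_mul] at key
  have h1 : ∀ x : ℝ, (x * s / s) ^ n * rexp (-(x * s)) = x ^ n * rexp (-(x * s)) := by
    intro x; rw [mul_div_cancel_right₀ _ hs.ne']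
  simp only [h1] at key
  rw [key, smul_eq_mul]
  have h2 : ∫ x in Ioi (0:ℝ), (x / s) ^ n * rexp (-x)
      = s⁻¹ ^ n * ∫ x in Ioi (0:ℝ), x ^ n * rexp (-x) := by
    rw [← integral_const_mul]
    congr 1; funext x; rw [div_pow]; field_simp
    rw [mul_assoc, ← mul_pow, mul_one_div_cancel hs.ne', one_pow, mul_one]
  rw [h2, gamma_int, pow_succ]
  field_simp
  rw [one_div, inv_pow, inv_mul_cancel₀ (pow_ne_zero _ hs.ne')]


lemma upos {x : ℝ} (hx : 0 ≤ x) : (0:ℝ) < 1 + 2 * x := by linarith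

lemma hasDerivAt_upow (p : ℝ) {x : ℝ} (hx : 0 ≤ x) :
    HasDerivAt (fun t : ℝ => (1 + 2 * t) ^ p) (2 * p * (1 + 2 * x) ^ (p - 1)) x := by
  have hu : HasDerivAt (fun t : ℝ => 1 + 2 * t) 2 x := by
    simpa using ((hasDerivAt_id x).const_mul 2).const_add 1
  exact hu.rpow_const (p := p) (Or.inl (upos hx).ne')

lemma tendsto_upow {y : ℝ} (hy : 0 < y) :
    Tendsto (fun t : ℝ => (1 + 2 * t) ^ (-y)) atTop (𝓝 0) := by
  have hU : Tendsto (fun t : ℝ => 1 + 2 * t) atTop atTop := by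
    apply tendsto_atTop_add_const_left
    exact Tendsto.const_mul_atTop two_pos tendsto_id
  exact (tendsto_rpow_neg_atTop hy).comp hU

lemma ratint (c : ℝ) (hc : 3 < c) (n : ℕ) (hn : n ≤ 2) :
    IntegrableOn (fun t : ℝ => t ^ n * (1 + 2 * t) ^ (-c)) (Ioi 0) ∧
    ∫ t in Ioi 0, t ^ n * (1 + 2 * t) ^ (-c) =
      (if n = 0 then 1 / (2 * (c - 1)) else if n = 1 then 1 / (4 * (c - 1) * (c - 2))
       else 1 / (4 * (c - 1) * (c - 2) * (c - 3))) := by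
  have h1c : c - 1 ≠ 0 := by linarith
  have h1c' : (1:ℝ) - c ≠ 0 := by linarith
  have h2c : c - 2 ≠ 0 := by linarith
  have h2c' : (2:ℝ) - c ≠ 0 := by linarith
  have h3c : c - 3 ≠ 0 := by linarith
  have h3c' : (3:ℝ) - c ≠ 0 := by linarith
  interval_cases n
  · -- n = 0
    set G : ℝ → ℝ := fun t => (1 / (2 * (1 - c))) * (1 + 2 * t) ^ (1 - c) with hG
    have hderiv : ∀ x ∈ Ici (0:ℝ), HasDerivAt G ((fun t : ℝ => t ^ 0 * (1 + 2 * t) ^ (-c)) x) x := by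
      intro x hx
      have h := (hasDerivAt_upow (1 - c) hx).const_mul (1 / (2 * (1 - c)))
      refine h.congr_deriv ?_
      symm
      rw [show (1:ℝ) - c - 1 = -c by ring]
      field_simp
    have hpos : ∀ x ∈ Ioi (0:ℝ), 0 ≤ (fun t : ℝ => t ^ 0 * (1 + 2 * t) ^ (-c)) x := by
      intro x hx
      have := upos (le_of_lt (mem_Ioi.mp hx))
      positivity
    have htend : Tendsto G atTop (𝓝 0) := by
      have h := (tendsto_upow (y := c - 1) (by linarith)).const_mul (1 / (2 * (1 - c)))
      simp only [mul_zero] at h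
      convert h using 2 with t
      rw [show -(c-1) = 1 - c by ring]
    refine ⟨integrableOn_Ioi_deriv_of_nonneg' hderiv hpos htend, ?_⟩
    rw [integral_Ioi_of_hasDerivAt_of_nonneg' hderiv hpos htend, hG]
    norm_num [Real.one_rpow]
    field_simp
    ring
  · -- n = 1
    set G : ℝ → ℝ := fun t => (1 / (4 * (2 - c))) * (1 + 2 * t) ^ (2 - c)
      + (1 / (4 * (c - 1))) * (1 + 2 * t) ^ (1 - c) with hG
    have hderiv : ∀ x ∈ Ici (0:ℝ), HasDerivAt G ((fun t : ℝ => t ^ 1 * (1 + 2 * t) ^ (-c)) x) x := by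
      intro x hx
      have h := ((hasDerivAt_upow (2 - c) hx).const_mul (1 / (4 * (2 - c)))).add
        ((hasDerivAt_upow (1 - c) hx).const_mul (1 / (4 * (c - 1))))
      refine h.congr_deriv ?_
      symm
      rw [show (1:ℝ) - c - 1 = -c by ring, show (2:ℝ) - c - 1 = 1 + -c by ring,
        Real.rpow_add (upos hx), Real.rpow_one]
      field_simp
      ring
    have hpos : ∀ x ∈ Ioi (0:ℝ), 0 ≤ (fun t : ℝ => t ^ 1 * (1 + 2 * t) ^ (-c)) x := by
      intro x hx
      have h1 := upos (le_of_lt (mem_Ioi.mp hx))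
      have h2 := le_of_lt (mem_Ioi.mp hx)
      positivity
    have htend : Tendsto G atTop (𝓝 0) := by
      have h := ((tendsto_upow (y := c - 2) (by linarith)).const_mul (1 / (4 * (2 - c)))).add
        ((tendsto_upow (y := c - 1) (by linarith)).const_mul (1 / (4 * (c - 1))))
      simp only [mul_zero, add_zero] at h
      convert h using 2 with t
      rw [show -(c-1) = 1 - c by ring, show -(c-2) = 2 - c by ring]
    refine ⟨integrableOn_Ioi_deriv_of_nonneg' hderiv hpos htend, ?_⟩
    rw [integral_Ioi_of_hasDerivAt_of_nonneg' hderiv hpos htend, hG]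
    norm_num [Real.one_rpow]
    field_simp
    ring
  · -- n = 2
    set G : ℝ → ℝ := fun t => (1 / (8 * (3 - c))) * (1 + 2 * t) ^ (3 - c)
      + (1 / (4 * (c - 2))) * (1 + 2 * t) ^ (2 - c)
      + (1 / (8 * (1 - c))) * (1 + 2 * t) ^ (1 - c) with hG
    have hderiv : ∀ x ∈ Ici (0:ℝ), HasDerivAt G ((fun t : ℝ => t ^ 2 * (1 + 2 * t) ^ (-c)) x) x := by
      intro x hx
      have h := (((hasDerivAt_upow (3 - c) hx).const_mul (1 / (8 * (3 - c)))).add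
        ((hasDerivAt_upow (2 - c) hx).const_mul (1 / (4 * (c - 2))))).add
        ((hasDerivAt_upow (1 - c) hx).const_mul (1 / (8 * (1 - c))))
      refine h.congr_deriv ?_
      symm
      rw [show (1:ℝ) - c - 1 = -c by ring, show (2:ℝ) - c - 1 = 1 + -c by ring,
        show (3:ℝ) - c - 1 = 1 + (1 + -c) by ring,
        Real.rpow_add (upos hx), Real.rpow_add (upos hx), Real.rpow_one]
      field_simp
      ring
    have hpos : ∀ x ∈ Ioi (0:ℝ), 0 ≤ (fun t : ℝ => t ^ 2 * (1 + 2 * t) ^ (-c)) x := by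
      intro x hx
      have h1 := upos (le_of_lt (mem_Ioi.mp hx))
      positivity
    have htend : Tendsto G atTop (𝓝 0) := by
      have h := (((tendsto_upow (y := c - 3) (by linarith)).const_mul (1 / (8 * (3 - c)))).add
        ((tendsto_upow (y := c - 2) (by linarith)).const_mul (1 / (4 * (c - 2))))).add
        ((tendsto_upow (y := c - 1) (by linarith)).const_mul (1 / (8 * (1 - c))))
      simp only [mul_zero, add_zero] at h
      convert h using 2 with t
      rw [show -(c-1) = 1 - c by ring, show -(c-2) = 2 - c by ring,
        show -(c-3) = 3 - c by ring]
    refine ⟨integrableOn_Ioi_deriv_of_nonneg' hderiv hpos htend, ?_⟩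
    rw [integral_Ioi_of_hasDerivAt_of_nonneg' hderiv hpos htend, hG]
    norm_num [Real.one_rpow]
    field_simp
    ring


lemma sqrt_inv_pow (k : ℕ) {u : ℝ} (hu : 0 < u) :
    ((Real.sqrt u)⁻¹) ^ k = u ^ (-((k:ℝ)/2)) := by
  rw [Real.sqrt_eq_rpow, ← Real.rpow_neg hu.le, ← Real.rpow_natCast (u ^ (-(1/2:ℝ))) k,
    ← Real.rpow_mul hu.le]
  congr 1
  ring



lemma inv_moment {Ω : Type*} [MeasurableSpace Ω] (μ : Measure Ω) [IsProbabilityMeasure μ]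
    (S : Ω → ℝ) (hSm : Measurable S) (hS0 : ∀ ω, 0 ≤ S ω) (hSpos : ∀ᵐ ω ∂μ, 0 < S ω)
    (L : ℝ → ℝ) (hL : ∀ t, 0 < t → ∫ ω, rexp (-(t * S ω)) ∂μ = L t)
    (n : ℕ) (c : ℝ) (hc : 0 ≤ c)
    (hint : IntegrableOn (fun t => t ^ n * L t) (Ioi 0))
    (hval : ∫ t in Ioi 0, t ^ n * L t = (n.factorial : ℝ) * c) :
    Integrable (fun ω => ((S ω)⁻¹) ^ (n + 1)) μ ∧ ∫ ω, ((S ω)⁻¹) ^ (n + 1) ∂μ = c := by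
  have hfm : Measurable fun ω => ((S ω)⁻¹) ^ (n + 1) := (hSm.inv).pow_const _
  have hfnn : ∀ ω, 0 ≤ ((S ω)⁻¹) ^ (n + 1) := fun ω => by
    have := hS0 ω; positivity
  have hNfac : (ENNReal.ofReal (n.factorial : ℝ)) ≠ 0 := by
    simp only [ne_eq, ENNReal.ofReal_eq_zero, not_le, Nat.cast_pos]
    exact n.factorial_pos
  have hNfac' : (ENNReal.ofReal (n.factorial : ℝ)) ≠ ⊤ := ENNReal.ofReal_ne_top
  -- pointwise identity for s > 0
  have hpt : ∀ s : ℝ, 0 < s → ENNReal.ofReal ((s⁻¹) ^ (n + 1))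
      = (ENNReal.ofReal (n.factorial : ℝ))⁻¹
        * ∫⁻ t in Ioi 0, ENNReal.ofReal (t ^ n * rexp (-(t * s))) := by
    intro s hs
    have h1 : ENNReal.ofReal (∫ t in Ioi 0, t ^ n * rexp (-(t * s)))
        = ∫⁻ t in Ioi 0, ENNReal.ofReal (t ^ n * rexp (-(t * s))) := by
      apply ofReal_integral_eq_lintegral_ofReal (texp_integrable hs n)
      filter_upwards [ae_restrict_mem measurableSet_Ioi] with t ht
      have ht' : (0:ℝ) ≤ t := le_of_lt ht
      positivity
    rw [← h1, texp_integral hs n]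
    rw [show (n.factorial : ℝ) / s ^ (n + 1) = (n.factorial : ℝ) * (s⁻¹) ^ (n + 1) by
      rw [div_eq_mul_inv, inv_pow]]
    rw [ENNReal.ofReal_mul (by positivity)]
    rw [← mul_assoc, ENNReal.inv_mul_cancel hNfac hNfac', one_mul]
  -- the product-measurable integrand
  have hFm : Measurable fun p : Ω × ℝ => ENNReal.ofReal (p.2 ^ n * rexp (-(p.2 * S p.1))) := by
    apply Measurable.ennreal_ofReal
    exact (measurable_snd.pow_const n).mul
      ((measurable_snd.mul (hSm.comp measurable_fst)).neg.exp)
  -- main lintegral identity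
  have key : ∫⁻ ω, ENNReal.ofReal (((S ω)⁻¹) ^ (n + 1)) ∂μ = ENNReal.ofReal c := by
    have e1 : ∫⁻ ω, ENNReal.ofReal (((S ω)⁻¹) ^ (n + 1)) ∂μ
        = ∫⁻ ω, ((ENNReal.ofReal (n.factorial : ℝ))⁻¹
            * ∫⁻ t in Ioi 0, ENNReal.ofReal (t ^ n * rexp (-(t * S ω)))) ∂μ := by
      apply lintegral_congr_ae
      filter_upwards [hSpos] with ω hω
      exact hpt (S ω) hω
    have e2 : ∫⁻ ω, ((ENNReal.ofReal (n.factorial : ℝ))⁻¹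
            * ∫⁻ t in Ioi 0, ENNReal.ofReal (t ^ n * rexp (-(t * S ω)))) ∂μ
        = (ENNReal.ofReal (n.factorial : ℝ))⁻¹
            * ∫⁻ ω, (∫⁻ t in Ioi 0, ENNReal.ofReal (t ^ n * rexp (-(t * S ω)))) ∂μ := by
      apply lintegral_const_mul
      exact hFm.lintegral_prod_right'
    have e3 : ∫⁻ ω, (∫⁻ t in Ioi 0, ENNReal.ofReal (t ^ n * rexp (-(t * S ω)))) ∂μ
        = ∫⁻ t in Ioi 0, (∫⁻ ω, ENNReal.ofReal (t ^ n * rexp (-(t * S ω))) ∂μ) := by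
      apply lintegral_lintegral_swap
      exact hFm.aemeasurable
    have e4 : ∫⁻ t in Ioi 0, (∫⁻ ω, ENNReal.ofReal (t ^ n * rexp (-(t * S ω))) ∂μ)
        = ∫⁻ t in Ioi 0, ENNReal.ofReal (t ^ n * L t) := by
      apply setLIntegral_congr_fun measurableSet_Ioi
      intro t ht
      have ht' : (0:ℝ) < t := ht
      have hLt : ∫ ω, rexp (-(t * S ω)) ∂μ = L t := hL t ht'
      have hintexp : Integrable (fun ω => rexp (-(t * S ω))) μ := by
        apply Integrable.mono' (integrable_const (1:ℝ))
        · exact ((hSm.const_mul t).neg.exp).aestronglyMeasurable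
        · apply ae_of_all
          intro ω
          rw [Real.norm_eq_abs, abs_of_pos (Real.exp_pos _)]
          apply Real.exp_le_one_iff.mpr
          have := hS0 ω
          nlinarith
      calc ∫⁻ ω, ENNReal.ofReal (t ^ n * rexp (-(t * S ω))) ∂μ
          = ∫⁻ ω, ENNReal.ofReal (t ^ n) * ENNReal.ofReal (rexp (-(t * S ω))) ∂μ := by
            apply lintegral_congr
            intro ω
            rw [ENNReal.ofReal_mul (by positivity)]
        _ = ENNReal.ofReal (t ^ n) * ∫⁻ ω, ENNReal.ofReal (rexp (-(t * S ω))) ∂μ :=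
            lintegral_const_mul _ (((hSm.const_mul t).neg.exp).ennreal_ofReal)
        _ = ENNReal.ofReal (t ^ n) * ENNReal.ofReal (L t) := by
            rw [← ofReal_integral_eq_lintegral_ofReal hintexp
              (ae_of_all _ fun ω => (Real.exp_pos _).le), hLt]
        _ = ENNReal.ofReal (t ^ n * L t) := by
            rw [← ENNReal.ofReal_mul (by positivity)]
    have e5 : ∫⁻ t in Ioi 0, ENNReal.ofReal (t ^ n * L t) = ENNReal.ofReal ((n.factorial : ℝ) * c) := by
      rw [← hval]
      rw [ofReal_integral_eq_lintegral_ofReal hint ?_]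
      filter_upwards [ae_restrict_mem measurableSet_Ioi] with t ht
      have ht' : (0:ℝ) < t := ht
      have hLnn : 0 ≤ L t := by
        rw [← hL t ht']
        exact integral_nonneg fun ω => (Real.exp_pos _).le
      positivity
    rw [e1, e2, e3, e4, e5, ENNReal.ofReal_mul (by positivity), ← mul_assoc,
      ENNReal.inv_mul_cancel hNfac hNfac', one_mul]
  constructor
  · refine ⟨hfm.aestronglyMeasurable, ?_⟩
    rw [hasFiniteIntegral_iff_ofReal (ae_of_all _ hfnn)]
    rw [key]
    exact ENNReal.ofReal_lt_top
  · rw [integral_eq_lintegral_of_nonneg_ae (ae_of_all _ hfnn) hfm.aestronglyMeasurable, key,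
      ENNReal.toReal_ofReal hc]


set_option maxHeartbeats 2000000 in
/-- For the studentized statistic `T_k = √k (V_k − 1)/(√2 V_k)`: there exist
`C > 0` and an integer `K ≥ 7` such that for every `k ≥ K`, `T_k³` is integrable and
`|E[T_k³] + 7√2/√k| ≤ C·k^{−3/2}`; i.e. `E[T_k³] = −7√2/√k + O(k^{−3/2})`. -/
theorem third_moment_of_studentized_statistic
    {Ω : Type*} [MeasurableSpace Ω] (μ : Measure Ω) [IsProbabilityMeasure μ]
    (Z : ℕ → Ω → ℝ)
    (hmeas : ∀ i, Measurable (Z i))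
    (hdist : ∀ i, Measure.map (Z i) μ = gaussianReal 0 1)
    (hindep : iIndepFun Z μ)
    (V T : ℕ → Ω → ℝ)
    (hV : ∀ k, V k = fun ω => (1 / (k : ℝ)) * ∑ i ∈ Finset.range k, (Z i ω) ^ 2)
    (hT : ∀ k, T k = fun ω => Real.sqrt k * (V k ω - 1) / (Real.sqrt 2 * V k ω)) :
    ∃ C > (0 : ℝ), ∃ K : ℕ, 7 ≤ K ∧ ∀ k : ℕ, K ≤ k →
      Integrable (fun ω => (T k ω) ^ 3) μ ∧
      |∫ ω, (T k ω) ^ 3 ∂μ + 7 * Real.sqrt 2 / Real.sqrt k| ≤ C * (k : ℝ) ^ (-(3 : ℝ) / 2) := by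
  refine ⟨600, by norm_num, 13, by norm_num, fun k hk => ?_⟩
  -- basic facts about k
  have hk13 : (13:ℝ) ≤ (k:ℝ) := by exact_mod_cast hk
  have hk0 : (0:ℝ) < (k:ℝ) := by linarith
  have hk2 : (0:ℝ) < (k:ℝ) - 2 := by linarith
  have hk4 : (0:ℝ) < (k:ℝ) - 4 := by linarith
  have hk6 : (0:ℝ) < (k:ℝ) - 6 := by linarith
  set S : Ω → ℝ := fun ω => ∑ i ∈ Finset.range k, (Z i ω) ^ 2 with hS
  have hSm : Measurable S := by
    apply Finset.measurable_sum
    intro i _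
    exact (hmeas i).pow_const 2
  have hS0 : ∀ ω, 0 ≤ S ω := fun ω => Finset.sum_nonneg fun i _ => sq_nonneg _
  -- a.e. positivity of S
  have hZ0 : ∀ᵐ ω ∂μ, Z 0 ω ≠ 0 := by
    have h0 : μ (Z 0 ⁻¹' {0}) = 0 := by
      rw [← Measure.map_apply (hmeas 0) (measurableSet_singleton 0), hdist 0,
        gaussianReal_apply 0 one_ne_zero, setLIntegral_measure_zero _ _ (measure_singleton 0)]
    rw [ae_iff]
    convert h0 using 2
    ext ω
    simp
  have hSpos : ∀ᵐ ω ∂μ, 0 < S ω := by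
    filter_upwards [hZ0] with ω hω
    have h1 : (Z 0 ω) ^ 2 ≤ S ω := by
      apply Finset.single_le_sum (f := fun i => (Z i ω) ^ 2) (fun i _ => sq_nonneg _)
      simp only [Finset.mem_range]
      omega
    have h2 : 0 < (Z 0 ω) ^ 2 := by positivity
    linarith
  -- the Laplace transform of S
  set c : ℝ := (k:ℝ)/2 with hcdef
  have hc3 : 3 < c := by rw [hcdef]; linarith
  have hc1 : (0:ℝ) < c - 1 := by linarith
  have hc2' : (0:ℝ) < c - 2 := by linarith
  have hc3' : (0:ℝ) < c - 3 := by linarith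
  set L : ℝ → ℝ := fun t => (1 + 2 * t) ^ (-c) with hLdef
  have hL : ∀ t, 0 < t → ∫ ω, rexp (-(t * S ω)) ∂μ = L t := by
    intro t ht
    rw [hS, laplace_sum μ Z hmeas hdist hindep k ht.le, hLdef]
    have hu : (0:ℝ) < 1 + 2 * t := by linarith
    rw [sqrt_inv_pow k hu, hcdef]
  -- the three inverse moments
  have hM1 := inv_moment μ S hSm hS0 hSpos L hL 0 (1/((k:ℝ)-2)) (by positivity)
    (ratint c hc3 0 (by norm_num)).1
    (by rw [(ratint c hc3 0 (by norm_num)).2,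
          show 2*(c-1) = (k:ℝ)-2 by rw [hcdef]; ring]
        norm_num)
  have hM2 := inv_moment μ S hSm hS0 hSpos L hL 1 (1/(((k:ℝ)-2)*((k:ℝ)-4))) (by positivity)
    (ratint c hc3 1 (by norm_num)).1
    (by rw [(ratint c hc3 1 (by norm_num)).2,
          show 4*(c-1)*(c-2) = ((k:ℝ)-2)*((k:ℝ)-4) by rw [hcdef]; ring]
        norm_num)
  have hM3 := inv_moment μ S hSm hS0 hSpos L hL 2
      (1/(((k:ℝ)-2)*((k:ℝ)-4)*((k:ℝ)-6))) (by positivity)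
    (ratint c hc3 2 (by norm_num)).1
    (by rw [(ratint c hc3 2 (by norm_num)).2,
          show 4*(c-1)*(c-2)*(c-3) = (((k:ℝ)-2)*((k:ℝ)-4)*((k:ℝ)-6))/2 by rw [hcdef]; ring,
          one_div_div]
        rw [show (Nat.factorial 2 : ℝ) = 2 by norm_num [Nat.factorial], mul_one_div]
        norm_num)
  -- the expanded integrand
  set c0 : ℝ := (k:ℝ) * Real.sqrt k / (2 * Real.sqrt 2) with hc0
  set g : Ω → ℝ := fun ω =>
    c0 - (3*(k:ℝ)*c0) * (S ω)⁻¹ + (3*(k:ℝ)^2*c0) * ((S ω)⁻¹)^2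
      - ((k:ℝ)^3*c0) * ((S ω)⁻¹)^3 with hg
  have hgint : Integrable g μ := by
    have hI1 : Integrable (fun ω => (S ω)⁻¹) μ := by simpa using hM1.1
    have hI2 : Integrable (fun ω => ((S ω)⁻¹)^2) μ := by simpa using hM2.1
    have hI3 : Integrable (fun ω => ((S ω)⁻¹)^3) μ := by simpa using hM3.1
    apply Integrable.congr (f := fun ω => (c0 - (3*(k:ℝ)*c0) * (S ω)⁻¹)
        + ((3*(k:ℝ)^2*c0) * ((S ω)⁻¹)^2 - ((k:ℝ)^3*c0) * ((S ω)⁻¹)^3))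
    · exact ((integrable_const c0).sub (hI1.const_mul _)).add
        ((hI2.const_mul _).sub (hI3.const_mul _))
    · apply ae_of_all
      intro ω
      simp only [hg]
      ring
  have hI1 : Integrable (fun ω => (S ω)⁻¹) μ := by simpa using hM1.1
  have hI2 : Integrable (fun ω => ((S ω)⁻¹)^2) μ := by simpa using hM2.1
  have hI3 : Integrable (fun ω => ((S ω)⁻¹)^3) μ := by simpa using hM3.1
  have hv1 : ∫ ω, (S ω)⁻¹ ∂μ = 1/((k:ℝ)-2) := by simpa using hM1.2
  have hv2 : ∫ ω, ((S ω)⁻¹)^2 ∂μ = 1/(((k:ℝ)-2)*((k:ℝ)-4)) := by simpa using hM2.2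
  have hv3 : ∫ ω, ((S ω)⁻¹)^3 ∂μ = 1/(((k:ℝ)-2)*((k:ℝ)-4)*((k:ℝ)-6)) := by
    simpa using hM3.2
  have hgval : ∫ ω, g ω ∂μ = c0 - (3*(k:ℝ)*c0) * (1/((k:ℝ)-2))
      + (3*(k:ℝ)^2*c0) * (1/(((k:ℝ)-2)*((k:ℝ)-4)))
      - ((k:ℝ)^3*c0) * (1/(((k:ℝ)-2)*((k:ℝ)-4)*((k:ℝ)-6))) := by
    have Ha : Integrable (fun ω => c0 - (3*(k:ℝ)*c0) * (S ω)⁻¹) μ :=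
      (integrable_const c0).sub (hI1.const_mul _)
    have Hb : Integrable
        (fun ω => (3*(k:ℝ)^2*c0) * ((S ω)⁻¹)^2 - ((k:ℝ)^3*c0) * ((S ω)⁻¹)^3) μ :=
      (hI2.const_mul _).sub (hI3.const_mul _)
    calc ∫ ω, g ω ∂μ
        = ∫ ω, ((c0 - (3*(k:ℝ)*c0) * (S ω)⁻¹)
            + ((3*(k:ℝ)^2*c0) * ((S ω)⁻¹)^2 - ((k:ℝ)^3*c0) * ((S ω)⁻¹)^3)) ∂μ := by
          apply integral_congr_ae
          apply ae_of_all
          intro ω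
          simp only [hg]
          ring
      _ = _ := by
          rw [integral_add Ha Hb, integral_sub (integrable_const c0) (hI1.const_mul _),
            integral_sub (hI2.const_mul _) (hI3.const_mul _), integral_const,
            integral_const_mul, integral_const_mul, integral_const_mul, hv1, hv2, hv3]
          simp only [measure_univ, probReal_univ, ENNReal.toReal_one, smul_eq_mul, one_mul, one_div]
          ring
  -- T^3 agrees a.e. with g
  have hTg : (fun ω => (T k ω) ^ 3) =ᵐ[μ] g := by
    filter_upwards [hSpos] with ω hω
    have hVω : V k ω = (1/(k:ℝ)) * S ω := by rw [hV]
    have hrk : Real.sqrt (k:ℝ) ^ 2 = (k:ℝ) := Real.sq_sqrt hk0.le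
    have hr2 : Real.sqrt 2 ^ 2 = 2 := Real.sq_sqrt (by norm_num)
    have hr2p : (0:ℝ) < Real.sqrt 2 := Real.sqrt_pos.mpr (by norm_num)
    have hrkp : (0:ℝ) < Real.sqrt (k:ℝ) := Real.sqrt_pos.mpr hk0
    have hSne : S ω ≠ 0 := hω.ne'
    have key : T k ω = (Real.sqrt (k:ℝ) / Real.sqrt 2) * (1 - (k:ℝ) * (S ω)⁻¹) := by
      rw [hT]
      simp only []
      rw [hVω]
      field_simp
    calc (T k ω) ^ 3
        = (Real.sqrt (k:ℝ) ^ 3 / Real.sqrt 2 ^ 3) * (1 - (k:ℝ) * (S ω)⁻¹) ^ 3 := by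
          rw [key]; ring
      _ = c0 * (1 - (k:ℝ) * (S ω)⁻¹) ^ 3 := by
          rw [hc0, show Real.sqrt (k:ℝ) ^ 3 = (k:ℝ) * Real.sqrt (k:ℝ) by
              rw [pow_succ, hrk],
            show Real.sqrt 2 ^ 3 = 2 * Real.sqrt 2 by rw [pow_succ, hr2]]
      _ = g ω := by simp only [hg]; ring
  have hT3int : Integrable (fun ω => (T k ω) ^ 3) μ := hgint.congr hTg.symm
  refine ⟨hT3int, ?_⟩
  rw [integral_congr_ae hTg, hgval]
  -- now the numeric estimate
  have hrkC : Real.sqrt (k:ℝ) ^ 2 = (k:ℝ) := Real.sq_sqrt hk0.le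
  have hpow : ((k:ℝ)) ^ (-(3:ℝ)/2) = ((k:ℝ) * Real.sqrt k)⁻¹ := by
    rw [show (-(3:ℝ)/2) = -(3/2) by norm_num, Real.rpow_neg hk0.le]
    congr 1
    rw [show (3:ℝ)/2 = 1 + 1/2 by norm_num, Real.rpow_add hk0, Real.rpow_one,
      Real.sqrt_eq_rpow]
  rw [hpow]
  set r2 : ℝ := Real.sqrt 2 with hr2def
  set rk : ℝ := Real.sqrt (k:ℝ) with hrkdef
  have hr2 : r2 ^ 2 = 2 := Real.sq_sqrt (by norm_num)
  have hrk : rk ^ 2 = (k:ℝ) := hrkC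
  have hr2p : (0:ℝ) < r2 := Real.sqrt_pos.mpr (by norm_num)
  have hrkp : (0:ℝ) < rk := Real.sqrt_pos.mpr hk0
  have hr2b : r2 ≤ 3/2 := by nlinarith [hr2, hr2p.le, sq_nonneg (r2 - 3/2)]
  have hc0' : c0 = (k:ℝ) * rk * r2 / 4 := by
    rw [hc0, div_eq_div_iff (by positivity : (0:ℝ) < 2 * r2).ne' (by norm_num : (4:ℝ) ≠ 0)]
    linear_combination (-2*(k:ℝ)*rk) * hr2
  have h7 : 7 * r2 / rk = 7 * r2 * rk / (k:ℝ) := by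
    rw [div_eq_div_iff hrkp.ne' hk0.ne']
    linear_combination (-7 * r2) * hrk
  set D : ℝ := ((k:ℝ)-2)*((k:ℝ)-4)*((k:ℝ)-6) with hDdef
  have hDpos : (0:ℝ) < D := by positivity
  have hEeq : c0 - (3*(k:ℝ)*c0) * (1/((k:ℝ)-2))
      + (3*(k:ℝ)^2*c0) * (1/(((k:ℝ)-2)*((k:ℝ)-4)))
      - ((k:ℝ)^3*c0) * (1/(((k:ℝ)-2)*((k:ℝ)-4)*((k:ℝ)-6)))
      + 7 * r2 / rk
      = r2 * rk * (-96*(k:ℝ)^2 + 308*(k:ℝ) - 336) / ((k:ℝ) * D) := by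
    rw [h7, hc0', hDdef]
    field_simp
    ring
  rw [hEeq, abs_le]
  have hM : (0:ℝ) < 96*(k:ℝ)^2 - 308*(k:ℝ) + 336 := by nlinarith
  have hpoly : (0:ℝ) ≤ 456*(k:ℝ)^3 - 6738*(k:ℝ)^2 + 25896*(k:ℝ) - 28800 := by
    nlinarith [mul_nonneg (mul_nonneg (by linarith : (0:ℝ) ≤ (k:ℝ) - 13)
      (by linarith : (0:ℝ) ≤ (k:ℝ) - 13)) (by linarith : (0:ℝ) ≤ (k:ℝ) - 13),
      sq_nonneg ((k:ℝ) - 13), (by linarith : (0:ℝ) ≤ (k:ℝ) - 13)]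
  constructor
  · rw [neg_le, show -(r2 * rk * (-96*(k:ℝ)^2 + 308*(k:ℝ) - 336) / ((k:ℝ) * D))
        = r2 * rk * (96*(k:ℝ)^2 - 308*(k:ℝ) + 336) / ((k:ℝ) * D) by ring]
    rw [← div_eq_mul_inv, div_le_div_iff₀ (by positivity) (by positivity)]
    have e : r2 * rk * (96*(k:ℝ)^2 - 308*(k:ℝ) + 336) * ((k:ℝ) * rk)
        = r2 * (k:ℝ) * (96*(k:ℝ)^2 - 308*(k:ℝ) + 336) * (k:ℝ) := by
      linear_combination (r2 * (96*(k:ℝ)^2 - 308*(k:ℝ) + 336) * (k:ℝ)) * hrk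
    rw [e, hDdef]
    nlinarith [mul_nonneg (sub_nonneg.mpr hr2b)
        (by positivity : (0:ℝ) ≤ (k:ℝ)^2 * (96*(k:ℝ)^2 - 308*(k:ℝ) + 336)),
      mul_nonneg hk0.le hpoly]
  · have hXle : r2 * rk * (-96*(k:ℝ)^2 + 308*(k:ℝ) - 336) / ((k:ℝ) * D) ≤ 0 := by
      apply div_nonpos_iff.mpr
      right
      refine ⟨by nlinarith [mul_nonneg (mul_nonneg hr2p.le hrkp.le) hM.le], by positivity⟩
    have : (0:ℝ) ≤ 600 * ((k:ℝ) * rk)⁻¹ := by positivity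
    linarith
end

section
/- The second cumulant (variance) of T_k satisfies: there exist a constant C > 0 and an integer K such that for all k ≥ K, |E[T_k^2] − (E[T_k])^2 − 1 − 8/k| ≤ C·k^{−3/2}; that is, Var(T_k) = 1 + 8/k + O(k^{−3/2}) as k → ∞. -/
open MeasureTheory ProbabilityTheory Real Finset Filter Topology

set_option maxHeartbeats 2000000

lemma integrable_abs_rpow_mul_exp {s : ℝ} (hs : -1 < s) :
    Integrable (fun x : ℝ => |x| ^ s * Real.exp (-(1/2) * x ^ 2)) := by
  have h := integrable_rpow_mul_exp_neg_mul_sq (b := 1/2) (by norm_num) hs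
  have honIoi : IntegrableOn (fun x : ℝ => |x| ^ s * Real.exp (-(1/2) * x ^ 2)) (Set.Ioi 0) := by
    refine (h.integrableOn.mono_set (Set.subset_univ _)).congr_fun ?_ measurableSet_Ioi
    intro x hx
    simp [abs_of_pos (Set.mem_Ioi.mp hx)]
  rw [← integrableOn_univ, ← Set.Iio_union_Ici (a := (0:ℝ)), integrableOn_union,
    integrableOn_Ici_iff_integrableOn_Ioi]
  refine ⟨?_, honIoi⟩
  rw [← (Measure.measurePreserving_neg (volume : Measure ℝ)).integrableOn_comp_preimage
      (Homeomorph.neg ℝ).measurableEmbedding]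
  have : Neg.neg ⁻¹' (Set.Iio (0:ℝ)) = Set.Ioi 0 := by
    ext x; simp
  rw [this]
  refine honIoi.congr_fun ?_ measurableSet_Ioi
  intro x _
  simp [Function.comp]

lemma gaussianReal_eq_withDensity :
    gaussianReal 0 1 = volume.withDensity (fun x => ENNReal.ofReal (gaussianPDFReal 0 1 x)) := by
  rw [gaussianReal_of_var_ne_zero 0 one_ne_zero]
  rfl

lemma integrable_gaussianReal_iff {g : ℝ → ℝ} :
    Integrable g (gaussianReal 0 1) ↔
      Integrable (fun x => g x * gaussianPDFReal 0 1 x) volume := by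
  rw [gaussianReal_eq_withDensity,
    integrable_withDensity_iff ((measurable_gaussianPDFReal 0 1).ennreal_ofReal)
      (Eventually.of_forall fun x => ENNReal.ofReal_lt_top)]
  refine integrable_congr (Eventually.of_forall fun x => ?_)
  simp only [ENNReal.toReal_ofReal (gaussianPDFReal_nonneg 0 1 x)]

lemma integral_gaussianReal (g : ℝ → ℝ) :
    ∫ x, g x ∂(gaussianReal 0 1) = ∫ x, g x * gaussianPDFReal 0 1 x := by
  rw [gaussianReal_eq_withDensity]
  have h1 : (fun x => ENNReal.ofReal (gaussianPDFReal 0 1 x))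
      = (fun x => ((gaussianPDFReal 0 1 x).toNNReal : ENNReal)) := by
    funext x; rw [ENNReal.ofReal]
  rw [h1, integral_withDensity_eq_integral_smul
    ((measurable_gaussianPDFReal 0 1).real_toNNReal)]
  refine integral_congr_ae (Eventually.of_forall fun x => ?_)
  simp [NNReal.smul_def, Real.coe_toNNReal _ (gaussianPDFReal_nonneg 0 1 x), mul_comm]

lemma gaussianPDFReal_zero_one (x : ℝ) :
    gaussianPDFReal 0 1 x = (Real.sqrt (2 * π))⁻¹ * Real.exp (-(1/2) * x ^ 2) := by
  rw [gaussianPDFReal]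
  push_cast
  rw [mul_one, sub_zero]
  congr 1
  ring

lemma gauss_abs_mom {s : ℝ} (hs : -1 < s) :
    Integrable (fun x => |x| ^ s) (gaussianReal 0 1) := by
  rw [integrable_gaussianReal_iff]
  have := (integrable_abs_rpow_mul_exp hs).const_mul (Real.sqrt (2 * π))⁻¹
  refine this.congr (Eventually.of_forall fun x => ?_)
  simp only [gaussianPDFReal_zero_one]
  ring

lemma stein1d (n : ℕ) {c : ℝ} (hc : 0 < c) :
    ∫ w, w ^ 2 / (w ^ 2 + c) ^ (n + 1) ∂(gaussianReal 0 1)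
      = ∫ w, (((w ^ 2 + c) ^ (n + 1))⁻¹
          - 2 * (n + 1) * w ^ 2 / (w ^ 2 + c) ^ (n + 2)) ∂(gaussianReal 0 1) := by
  set φ : ℝ → ℝ := fun w => (Real.sqrt (2 * π))⁻¹ * Real.exp (-(1/2) * w ^ 2) with hφdef
  have hφpos : ∀ w, 0 < φ w := by
    intro w
    have h2π : (0:ℝ) < Real.sqrt (2 * π) := Real.sqrt_pos.mpr (by positivity)
    positivity
  have hA : ∀ w : ℝ, (0:ℝ) < w ^ 2 + c := fun w => by positivity
  have hAne : ∀ w : ℝ, (w ^ 2 + c) ≠ 0 := fun w => (hA w).ne'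
  have hcpow : ∀ m : ℕ, (0:ℝ) < c ^ m := fun m => pow_pos hc m
  have hApow_ge : ∀ (w : ℝ) (m : ℕ), c ^ m ≤ (w ^ 2 + c) ^ m := by
    intro w m
    exact pow_le_pow_left₀ hc.le (by nlinarith [sq_nonneg w]) m
  set g : ℝ → ℝ := fun w => w / (w ^ 2 + c) ^ (n + 1) with hgdef
  set q : ℝ → ℝ := fun w =>
    ((w ^ 2 + c) ^ (n + 1))⁻¹ - 2 * (n + 1) * w ^ 2 / (w ^ 2 + c) ^ (n + 2) with hqdef
  -- derivative of φ
  have hφ : ∀ w, HasDerivAt φ (-w * φ w) w := by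
    intro w
    have h1 : HasDerivAt (fun w : ℝ => -(1/2) * w ^ 2) (-(1/2) * (2 * w)) w := by
      simpa using (hasDerivAt_pow 2 w).const_mul (-(1/2) : ℝ)
    have h2 := (h1.exp).const_mul (Real.sqrt (2 * π))⁻¹
    refine h2.congr_deriv ?_
    simp only [hφdef]
    ring
  -- derivative of g
  have hg : ∀ w, HasDerivAt g (q w) w := by
    intro w
    have hb : HasDerivAt (fun w : ℝ => w ^ 2 + c) (2 * w) w := by
      simpa using (hasDerivAt_pow 2 w).add_const c
    have hp : HasDerivAt (fun w : ℝ => (w ^ 2 + c) ^ (n + 1))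
        ((n + 1 : ℕ) * (w ^ 2 + c) ^ n * (2 * w)) w := by
      simpa using hb.fun_pow (n + 1)
    have hd := (hasDerivAt_id w).div hp (pow_ne_zero _ (hAne w))
    refine hd.congr_deriv ?_
    simp only [hqdef, id_eq]
    field_simp
    push_cast
    ring
  -- h and its derivative
  set h : ℝ → ℝ := fun w => -(g w) * φ w with hhdef
  set h' : ℝ → ℝ := fun w => (w * g w - q w) * φ w with hh'def
  have hderiv : ∀ w, HasDerivAt h (h' w) w := by
    intro w
    have := ((hg w).neg).mul (hφ w)
    refine this.congr_deriv ?_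
    simp only [hh'def, hhdef, Pi.neg_apply]
    ring
  -- pointwise bounds
  have hwg_eq : ∀ w : ℝ, w * g w = w ^ 2 / (w ^ 2 + c) ^ (n + 1) := by
    intro w; simp only [hgdef]; ring
  have hwg_bound : ∀ w : ℝ, |w * g w| ≤ w ^ 2 / c ^ (n + 1) := by
    intro w
    rw [hwg_eq, abs_of_nonneg (by positivity)]
    gcongr
    linarith [sq_nonneg w]
  have hq_bound : ∀ w : ℝ, |q w| ≤ (3 + 2 * n) / c ^ (n + 1) := by
    intro w
    have h1 : |((w ^ 2 + c) ^ (n + 1))⁻¹| ≤ (c ^ (n + 1))⁻¹ := by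
      rw [abs_of_nonneg (by positivity)]
      exact inv_anti₀ (hcpow _) (hApow_ge w _)
    have h2 : |2 * (n + 1 : ℝ) * w ^ 2 / (w ^ 2 + c) ^ (n + 2)| ≤
        2 * (n + 1) * (c ^ (n + 1))⁻¹ := by
      rw [abs_of_nonneg (by positivity)]
      have hkey : c ^ (n + 1) * w ^ 2 ≤ (w ^ 2 + c) ^ (n + 2) := by
        calc c ^ (n + 1) * w ^ 2 ≤ (w ^ 2 + c) ^ (n + 1) * (w ^ 2 + c) :=
            mul_le_mul (hApow_ge w _) (by linarith [sq_nonneg w]) (sq_nonneg w)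
              (pow_nonneg (hA w).le _)
          _ = (w ^ 2 + c) ^ (n + 2) := (pow_succ _ _).symm
      have hle : w ^ 2 / (w ^ 2 + c) ^ (n + 2) ≤ (c ^ (n + 1))⁻¹ := by
        rw [div_le_iff₀ (by positivity)]
        calc w ^ 2 = (c ^ (n + 1))⁻¹ * (c ^ (n + 1) * w ^ 2) := by field_simp
          _ ≤ (c ^ (n + 1))⁻¹ * (w ^ 2 + c) ^ (n + 2) := by gcongr
          _ = (c ^ (n + 1))⁻¹ * (w ^ 2 + c) ^ (n + 2) := rfl
      calc 2 * (n + 1 : ℝ) * w ^ 2 / (w ^ 2 + c) ^ (n + 2)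
          = 2 * (n + 1) * (w ^ 2 / (w ^ 2 + c) ^ (n + 2)) := by ring
        _ ≤ 2 * (n + 1) * (c ^ (n + 1))⁻¹ := by
            refine mul_le_mul_of_nonneg_left hle (by positivity)
    calc |q w| ≤ |((w ^ 2 + c) ^ (n + 1))⁻¹| + |2 * (n + 1 : ℝ) * w ^ 2 / (w ^ 2 + c) ^ (n + 2)|
        := abs_sub _ _
      _ ≤ (c ^ (n + 1))⁻¹ + 2 * (n + 1) * (c ^ (n + 1))⁻¹ := add_le_add h1 h2
      _ = (3 + 2 * n) / c ^ (n + 1) := by push_cast; field_simp; ring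
  -- measurability of pieces
  have hφmeas : Measurable φ := by
    simp only [hφdef]; fun_prop
  have hgmeas : Measurable g := by
    simp only [hgdef]; fun_prop
  have hqmeas : Measurable q := by
    simp only [hqdef]; fun_prop
  -- integrable dominating functions
  have hexp : Integrable (fun w : ℝ => Real.exp (-(1/2) * w ^ 2)) := by
    simpa using integrable_exp_neg_mul_sq (b := 1/2) (by norm_num)
  have hsq : Integrable (fun w : ℝ => w ^ 2 * Real.exp (-(1/2) * w ^ 2)) := by
    refine (integrable_abs_rpow_mul_exp (s := 2) (by norm_num)).congr
      (Eventually.of_forall fun w => ?_)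
    have habs : |w| ^ (2:ℝ) = w ^ 2 := by
      rw [show (2:ℝ) = ((2:ℕ):ℝ) by norm_num, Real.rpow_natCast, sq_abs]
    simp only [habs]
  have hφint : Integrable φ := hexp.const_mul _
  have hsqφint : Integrable (fun w => w ^ 2 * φ w) := by
    refine (hsq.const_mul (Real.sqrt (2 * π))⁻¹).congr (Eventually.of_forall fun w => ?_)
    simp only [hφdef]; ring
  -- integrability of the two pieces
  have hwgφint : Integrable (fun w => (w * g w) * φ w) := by
    refine Integrable.mono' (hsqφint.const_mul ((c ^ (n+1))⁻¹)) ?_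
      (Eventually.of_forall fun w => ?_)
    · exact (((measurable_id.mul hgmeas).mul hφmeas)).aestronglyMeasurable
    · rw [norm_mul, Real.norm_eq_abs, Real.norm_eq_abs, abs_of_pos (hφpos w)]
      calc |w * g w| * φ w ≤ w ^ 2 / c ^ (n+1) * φ w :=
          mul_le_mul_of_nonneg_right (hwg_bound w) (hφpos w).le
        _ = (c ^ (n+1))⁻¹ * (w ^ 2 * φ w) := by ring
  have hqφint : Integrable (fun w => q w * φ w) := by
    refine Integrable.mono' (hφint.const_mul ((3 + 2*n) / c ^ (n+1))) ?_
      (Eventually.of_forall fun w => ?_)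
    · exact (hqmeas.mul hφmeas).aestronglyMeasurable
    · rw [norm_mul, Real.norm_eq_abs, Real.norm_eq_abs, abs_of_pos (hφpos w)]
      exact mul_le_mul_of_nonneg_right (hq_bound w) (hφpos w).le
  have hh'int : Integrable h' := by
    refine ((hwgφint.sub hqφint).congr (Eventually.of_forall fun w => ?_))
    simp only [hh'def, Pi.sub_apply]; ring
  -- limits of h at ±∞
  have hgbd : ∀ w : ℝ, |g w| ≤ (Real.sqrt c * c ^ n)⁻¹ := by
    intro w
    have hsc : (0:ℝ) < Real.sqrt c := Real.sqrt_pos.mpr hc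
    have hamgm : Real.sqrt c * |w| ≤ w ^ 2 + c := by
      nlinarith [sq_nonneg (|w| - Real.sqrt c), Real.sq_sqrt hc.le, sq_abs w]
    have key : Real.sqrt c * c ^ n * |w| ≤ (w ^ 2 + c) ^ (n + 1) := by
      calc Real.sqrt c * c ^ n * |w| = c ^ n * (Real.sqrt c * |w|) := by ring
        _ ≤ (w ^ 2 + c) ^ n * (w ^ 2 + c) :=
          mul_le_mul (hApow_ge w n) hamgm (by positivity) (by positivity)
        _ = (w ^ 2 + c) ^ (n + 1) := (pow_succ _ _).symm
    simp only [hgdef, abs_div, abs_of_pos (pow_pos (hA w) (n+1))]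
    rw [div_le_iff₀ (pow_pos (hA w) (n+1))]
    calc |w| = (Real.sqrt c * c ^ n)⁻¹ * (Real.sqrt c * c ^ n * |w|) := by
          field_simp
      _ ≤ (Real.sqrt c * c ^ n)⁻¹ * (w ^ 2 + c) ^ (n + 1) := by
          gcongr <;> positivity
  have hφtop : Tendsto φ atTop (𝓝 0) := by
    have h1 : Tendsto (fun w : ℝ => -(1/2) * w ^ 2) atTop atBot := by
      rw [show (fun w : ℝ => -(1/2) * w ^ 2) = (fun w : ℝ => -((1/2) * w ^ 2)) by
        funext w; ring]
      exact tendsto_neg_atTop_atBot.comp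
        (Tendsto.const_mul_atTop (by norm_num)
          (tendsto_pow_atTop (by norm_num : (2:ℕ) ≠ 0)))
    have h3 := (Real.tendsto_exp_atBot.comp h1).const_mul (Real.sqrt (2 * π))⁻¹
    rw [mul_zero] at h3
    exact h3
  have hφbot : Tendsto φ atBot (𝓝 0) := by
    have h2 : Tendsto (fun w : ℝ => w ^ 2) atBot atTop := by
      have habs : Tendsto (fun w : ℝ => |w|) atBot atTop := tendsto_abs_atBot_atTop
      have hpow : Tendsto (fun x : ℝ => x ^ 2) atTop atTop :=
        tendsto_pow_atTop (by norm_num : (2:ℕ) ≠ 0)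
      refine (hpow.comp habs).congr fun w => ?_
      simp [Function.comp, sq_abs]
    have h1 : Tendsto (fun w : ℝ => -(1/2) * w ^ 2) atBot atBot := by
      rw [show (fun w : ℝ => -(1/2) * w ^ 2) = (fun w : ℝ => -((1/2) * w ^ 2)) by
        funext w; ring]
      exact tendsto_neg_atTop_atBot.comp (Tendsto.const_mul_atTop (by norm_num) h2)
    have h3 := (Real.tendsto_exp_atBot.comp h1).const_mul (Real.sqrt (2 * π))⁻¹
    rw [mul_zero] at h3
    exact h3
  have hhbound : ∀ w, ‖h w‖ ≤ (Real.sqrt c * c ^ n)⁻¹ * φ w := by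
    intro w
    simp only [hhdef]
    rw [norm_mul, Real.norm_eq_abs, Real.norm_eq_abs, abs_neg, abs_of_pos (hφpos w)]
    exact mul_le_mul_of_nonneg_right (hgbd w) (hφpos w).le
  have hhtop : Tendsto h atTop (𝓝 0) := by
    have h3 := hφtop.const_mul (Real.sqrt c * c ^ n)⁻¹
    rw [mul_zero] at h3
    exact squeeze_zero_norm hhbound h3
  have hhbot : Tendsto h atBot (𝓝 0) := by
    have h3 := hφbot.const_mul (Real.sqrt c * c ^ n)⁻¹
    rw [mul_zero] at h3
    exact squeeze_zero_norm hhbound h3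
  -- FTC on ℝ
  have hFTC : ∫ w, h' w = 0 := by
    rw [integral_of_hasDerivAt_of_tendsto hderiv hh'int hhbot hhtop]
    simp
  have hsplit : ∫ w, (w * g w) * φ w = ∫ w, q w * φ w := by
    have : ∫ w, ((w * g w) * φ w - q w * φ w) = 0 := by
      rw [← hFTC]
      refine integral_congr_ae (Eventually.of_forall fun w => ?_)
      simp only [hh'def]; ring
    rw [integral_sub hwgφint hqφint] at this
    linarith
  -- convert to gaussian integrals
  rw [integral_gaussianReal, integral_gaussianReal]
  simp only [gaussianPDFReal_zero_one]
  calc ∫ w, w ^ 2 / (w ^ 2 + c) ^ (n + 1) * ((Real.sqrt (2*π))⁻¹ * Real.exp (-(1/2) * w ^ 2))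
      = ∫ w, (w * g w) * φ w := by
        refine integral_congr_ae (Eventually.of_forall fun w => ?_)
        simp only [hwg_eq, hφdef]
    _ = ∫ w, q w * φ w := hsplit
    _ = _ := by
        refine integral_congr_ae (Eventually.of_forall fun w => ?_)
        simp only [hqdef, hφdef]

lemma integrable_prod_abs_rpow {Ω : Type*} [MeasurableSpace Ω] (μ : Measure Ω)
    [IsProbabilityMeasure μ] (Z : ℕ → Ω → ℝ)
    (hmeas : ∀ i, Measurable (Z i))
    (hdist : ∀ i, Measure.map (Z i) μ = gaussianReal 0 1)
    (hindep : iIndepFun Z μ)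
    (s : Finset ℕ) {a : ℝ} (ha : -1 < a) :
    Integrable (fun ω => ∏ j ∈ s, |Z j ω| ^ a) μ := by
  classical
  induction s using Finset.induction_on with
  | empty => simp
  | @insert i t hnotmem ih =>
    have hone : ∀ j : ℕ, Integrable (fun ω => |Z j ω| ^ a) μ := by
      intro j
      have h1 : Integrable (fun x : ℝ => |x| ^ a) (Measure.map (Z j) μ) := by
        rw [hdist j]; exact gauss_abs_mom ha
      exact (integrable_map_measure
        (by fun_prop : Measurable fun x : ℝ => |x| ^ a).aestronglyMeasurable
        (hmeas j).aemeasurable).mp h1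
    have hfam : iIndepFun
        (fun j => (fun x : ℝ => |x| ^ a) ∘ Z j) μ :=
      hindep.comp _ (fun _ => by fun_prop)
    have hind : IndepFun (∏ j ∈ t, (fun x : ℝ => |x| ^ a) ∘ Z j)
        ((fun x : ℝ => |x| ^ a) ∘ Z i) μ :=
      hfam.indepFun_finset_prod_of_notMem (fun j => by fun_prop) hnotmem
    have hprodInt : Integrable (∏ j ∈ t, (fun x : ℝ => |x| ^ a) ∘ Z j) μ := by
      refine ih.congr (Eventually.of_forall fun ω => ?_)
      rw [Finset.prod_apply]
      rfl
    have := hind.integrable_mul hprodInt (hone i)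
    refine this.congr (Eventually.of_forall fun ω => ?_)
    simp only [Pi.mul_apply, Finset.prod_apply, Function.comp_apply,
      Finset.prod_insert hnotmem]
    ring

/-- The variance (second cumulant) of the studentized statistic
`T_k = √k (V_k − 1)/(√2 V_k)` satisfies `Var(T_k) = 1 + 8/k + O(k^{−3/2})` as `k → ∞`. -/
theorem second_cumulant_of_studentized_statistic
    {Ω : Type*} [MeasurableSpace Ω] (μ : Measure Ω) [IsProbabilityMeasure μ]
    (Z : ℕ → Ω → ℝ)
    (hmeas : ∀ i, Measurable (Z i))
    (hdist : ∀ i, Measure.map (Z i) μ = gaussianReal 0 1)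
    (hindep : iIndepFun Z μ)
    (V T : ℕ → Ω → ℝ)
    (hV : ∀ k, V k = fun ω => (1 / (k : ℝ)) * ∑ i ∈ Finset.range k, (Z i ω) ^ 2)
    (hT : ∀ k, T k = fun ω => Real.sqrt k * (V k ω - 1) / (Real.sqrt 2 * V k ω)) :
    ∃ C > (0 : ℝ), ∃ K : ℕ, ∀ k : ℕ, K ≤ k →
      |(∫ ω, (T k ω) ^ 2 ∂μ) - (∫ ω, T k ω ∂μ) ^ 2 - 1 - 8 / (k : ℝ)|
        ≤ C * (k : ℝ) ^ (-(3 : ℝ) / 2) := by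
  classical
  refine ⟨352, by norm_num, 12, fun k hk => ?_⟩
  have hx12 : (12:ℝ) ≤ (k:ℝ) := by exact_mod_cast hk
  have hx0 : (0:ℝ) < (k:ℝ) := by linarith
  set S : Ω → ℝ := fun ω => ∑ i ∈ Finset.range k, Z i ω ^ 2 with hSdef
  have hSmeas : Measurable S := by
    apply Finset.measurable_sum
    intro i _
    exact (hmeas i).pow_const 2
  -- each Z j is a.s. nonzero
  have hZne : ∀ j, ∀ᵐ ω ∂μ, Z j ω ≠ 0 := by
    intro j
    have h0 : μ (Z j ⁻¹' {0}) = 0 := by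
      rw [← Measure.map_apply (hmeas j) (measurableSet_singleton 0), hdist j]
      exact gaussianReal_absolutelyContinuous 0 one_ne_zero (measure_singleton 0)
    rw [ae_iff]
    convert h0 using 2
    ext ω
    simp
  have hallne : ∀ᵐ ω ∂μ, ∀ j ∈ Finset.range k, Z j ω ≠ 0 :=
    (ae_ball_iff (Finset.range k : Finset ℕ).countable_toSet).mpr fun j _ => hZne j
  have hSpos : ∀ᵐ ω ∂μ, 0 < S ω := by
    filter_upwards [hZne 0] with ω h0
    have h1 : 0 < Z 0 ω ^ 2 := by positivity
    have h2 : Z 0 ω ^ 2 ≤ S ω :=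
      Finset.single_le_sum (fun i _ => sq_nonneg (Z i ω))
        (Finset.mem_range.mpr (by omega))
    linarith
  -- integrability of (S^m)⁻¹ for m ≤ 2
  have hint : ∀ m : ℕ, m ≤ 2 → Integrable (fun ω => ((S ω) ^ m)⁻¹) μ := by
    intro m hm
    rcases Nat.eq_zero_or_pos m with hm0 | hmpos
    · subst hm0; simp
    have ha : (-1:ℝ) < -(2 * (m:ℝ)) / k := by
      rw [neg_div, neg_lt_neg_iff, div_lt_one hx0]
      have : (m:ℝ) ≤ 2 := by exact_mod_cast hm
      linarith
    refine Integrable.mono'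
      (integrable_prod_abs_rpow μ Z hmeas hdist hindep (Finset.range k) ha)
      ((hSmeas.pow_const m).inv.aestronglyMeasurable) ?_
    filter_upwards [hallne, hSpos] with ω hne hS
    rw [Real.norm_eq_abs, abs_of_nonneg (by positivity)]
    -- AM-GM domination
    set P : ℝ := ∏ j ∈ Finset.range k, (Z j ω ^ 2) ^ ((1:ℝ)/k) with hPdef
    have hPpos : 0 < P := by
      refine Finset.prod_pos fun j hj => ?_
      have := hne j hj
      positivity
    have hPS : P ≤ S ω := by
      have hge := Real.geom_mean_le_arith_mean_weighted (Finset.range k)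
        (fun _ => (1:ℝ)/k) (fun j => Z j ω ^ 2)
        (fun _ _ => by positivity)
        (by
          rw [Finset.sum_const, Finset.card_range, nsmul_eq_mul]
          field_simp)
        (fun j _ => sq_nonneg _)
      calc P ≤ ∑ j ∈ Finset.range k, (1:ℝ)/k * Z j ω ^ 2 := hge
        _ = (1/k) * S ω := by rw [← Finset.mul_sum]
        _ ≤ 1 * S ω := by
            apply mul_le_mul_of_nonneg_right _ hS.le
            rw [div_le_one hx0]; linarith
        _ = S ω := one_mul _
    have hPm : (S ω ^ m)⁻¹ ≤ (P ^ m)⁻¹ := by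
      apply inv_anti₀ (pow_pos hPpos m)
      exact pow_le_pow_left₀ hPpos.le hPS m
    refine hPm.trans (le_of_eq ?_)
    rw [← Finset.prod_pow, ← Finset.prod_inv_distrib]
    refine Finset.prod_congr rfl fun j hj => ?_
    have hz2 : (0:ℝ) ≤ Z j ω ^ 2 := sq_nonneg _
    rw [← Real.rpow_natCast ((Z j ω ^ 2) ^ ((1:ℝ)/k)) m, ← Real.rpow_mul hz2,
      ← Real.rpow_neg hz2, ← sq_abs (Z j ω),
      ← Real.rpow_natCast |Z j ω| 2, ← Real.rpow_mul (abs_nonneg _)]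
    congr 1
    push_cast
    ring
  -- pointwise bound Z i ^2 / S^m ≤ (S^(m-1))⁻¹
  have hptwise : ∀ (i : ℕ), i ∈ Finset.range k → ∀ (m : ℕ) (ω : Ω),
      Z i ω ^ 2 / S ω ^ (m + 1) ≤ (S ω ^ m)⁻¹ := by
    intro i hi m ω
    have hZS : Z i ω ^ 2 ≤ S ω :=
      Finset.single_le_sum (fun j _ => sq_nonneg (Z j ω)) hi
    have hS0 : 0 ≤ S ω := (sq_nonneg (Z i ω)).trans hZS
    rcases eq_or_lt_of_le hS0 with hS | hS
    · rw [← hS]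
      simp
    · rw [div_le_iff₀ (by positivity), pow_succ]
      calc Z i ω ^ 2 = (S ω ^ m)⁻¹ * (S ω ^ m * Z i ω ^ 2) := by
            field_simp
        _ ≤ (S ω ^ m)⁻¹ * (S ω ^ m * S ω) := by gcongr
  have hintZ : ∀ (i : ℕ), i ∈ Finset.range k → ∀ m : ℕ, 1 ≤ m → m ≤ 3 →
      Integrable (fun ω => Z i ω ^ 2 / S ω ^ m) μ := by
    intro i hi m hm1 hm3
    obtain ⟨n, rfl⟩ : ∃ n, m = n + 1 := ⟨m - 1, by omega⟩
    refine Integrable.mono' (hint n (by omega)) ?_ ?_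
    · exact (((hmeas i).pow_const 2).div (hSmeas.pow_const (n+1))).aestronglyMeasurable
    · refine Eventually.of_forall fun ω => ?_
      rw [Real.norm_eq_abs, abs_of_nonneg (by positivity)]
      exact hptwise i hi n ω
  -- Stein's identity on Ω
  have stein : ∀ (i : ℕ), i ∈ Finset.range k → ∀ n : ℕ, n ≤ 1 →
      ∫ ω, Z i ω ^ 2 / S ω ^ (n+1) ∂μ
        = (∫ ω, ((S ω) ^ (n+1))⁻¹ ∂μ)
          - 2 * ((n:ℝ)+1) * ∫ ω, Z i ω ^ 2 / S ω ^ (n+2) ∂μ := by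
    intro i hi n hn
    set C : Ω → ℝ := fun ω => ∑ j ∈ (Finset.range k).erase i, Z j ω ^ 2 with hCdef
    have hCmeas : Measurable C := by
      apply Finset.measurable_sum
      intro j _
      exact (hmeas j).pow_const 2
    have hSC : ∀ ω, S ω = Z i ω ^ 2 + C ω := by
      intro ω
      exact (Finset.add_sum_erase _ (fun j => Z j ω ^ 2) hi).symm
    have hCpos : ∀ᵐ ω ∂μ, 0 < C ω := by
      set j0 : ℕ := if i = 0 then 1 else 0 with hj0def
      have hj0 : j0 ∈ (Finset.range k).erase i := by
        rw [Finset.mem_erase, Finset.mem_range]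
        rcases Nat.eq_zero_or_pos i with h | h
        · simp [hj0def, h]; omega
        · have : ¬ (i = 0) := by omega
          simp [hj0def, this]; omega
      filter_upwards [hZne j0] with ω h0
      have h1 : 0 < Z j0 ω ^ 2 := by positivity
      have h2 : Z j0 ω ^ 2 ≤ C ω :=
        Finset.single_le_sum (fun j _ => sq_nonneg (Z j ω)) hj0
      linarith
    -- independence of C and Z i
    have hIndepCZ : IndepFun C (Z i) μ := by
      set g : ℕ → ℝ → ℝ := fun j => if j = i then id else fun x => x ^ 2 with hgdef
      have hgm : ∀ j, Measurable (g j) := by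
        intro j
        simp only [hgdef]
        split_ifs
        · exact measurable_id
        · exact measurable_id.pow_const 2
      have hcomp : iIndepFun (fun j => g j ∘ Z j) μ :=
        hindep.comp g hgm
      have h2 := hcomp.indepFun_finset_sum_of_notMem
        (fun j => (hgm j).comp (hmeas j)) (Finset.notMem_erase i (Finset.range k))
      have hsum_eq : (∑ j ∈ (Finset.range k).erase i, (g j ∘ Z j)) = C := by
        funext ω
        rw [Finset.sum_apply]
        refine Finset.sum_congr rfl fun j hj => ?_
        have hne : j ≠ i := Finset.ne_of_mem_erase hj
        simp [hgdef, hne]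
      have hgi : (g i ∘ Z i) = Z i := by
        funext ω
        simp [hgdef]
      rwa [hsum_eq, hgi] at h2
    have hpair : Measure.map (fun ω => (C ω, Z i ω)) μ
        = (Measure.map C μ).prod (gaussianReal 0 1) := by
      rw [← hdist i]
      exact (indepFun_iff_map_prod_eq_prod_map_map hCmeas.aemeasurable
        (hmeas i).aemeasurable).mp hIndepCZ
    have hprob : IsProbabilityMeasure (Measure.map C μ) :=
      Measure.isProbabilityMeasure_map hCmeas.aemeasurable
    have hν : ∀ᵐ c ∂(Measure.map C μ), 0 < c := by
      rw [MeasureTheory.ae_map_iff hCmeas.aemeasurable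
        (measurableSet_Ioi : MeasurableSet (Set.Ioi (0:ℝ)))]
      exact hCpos
    set F : ℝ × ℝ → ℝ := fun p => p.2 ^ 2 / (p.2 ^ 2 + p.1) ^ (n+1) with hFdef
    set G : ℝ × ℝ → ℝ := fun p => ((p.2 ^ 2 + p.1) ^ (n+1))⁻¹
        - 2 * ((n:ℝ)+1) * p.2 ^ 2 / (p.2 ^ 2 + p.1) ^ (n+2) with hGdef
    have hFmeas : Measurable F := by simp only [hFdef]; fun_prop
    have hGmeas : Measurable G := by simp only [hGdef]; fun_prop
    have hFcomp : (fun ω => F (C ω, Z i ω)) = fun ω => Z i ω ^ 2 / S ω ^ (n+1) := by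
      funext ω
      simp only [hFdef, hSC ω]
    have hGcomp : (fun ω => G (C ω, Z i ω))
        = fun ω => ((S ω) ^ (n+1))⁻¹ - 2 * ((n:ℝ)+1) * Z i ω ^ 2 / S ω ^ (n+2) := by
      funext ω
      simp only [hGdef, hSC ω]
    have hpairmeas : AEMeasurable (fun ω => (C ω, Z i ω)) μ :=
      (hCmeas.prodMk (hmeas i)).aemeasurable
    have hFintΩ : Integrable (fun ω => F (C ω, Z i ω)) μ := by
      rw [hFcomp]; exact hintZ i hi (n+1) (by omega) (by omega)
    have hGintΩ : Integrable (fun ω => G (C ω, Z i ω)) μ := by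
      rw [hGcomp]
      refine (hint (n+1) (by omega)).sub ?_
      have := (hintZ i hi (n+2) (by omega) (by omega)).const_mul (2 * ((n:ℝ)+1))
      refine this.congr (Eventually.of_forall fun ω => ?_)
      ring
    have hFprod : Integrable F ((Measure.map C μ).prod (gaussianReal 0 1)) := by
      rw [← hpair]
      exact (integrable_map_measure hFmeas.aestronglyMeasurable hpairmeas).mpr hFintΩ
    have hGprod : Integrable G ((Measure.map C μ).prod (gaussianReal 0 1)) := by
      rw [← hpair]
      exact (integrable_map_measure hGmeas.aestronglyMeasurable hpairmeas).mpr hGintΩ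
    calc ∫ ω, Z i ω ^ 2 / S ω ^ (n+1) ∂μ
        = ∫ ω, F (C ω, Z i ω) ∂μ := by rw [hFcomp]
      _ = ∫ p, F p ∂(Measure.map (fun ω => (C ω, Z i ω)) μ) :=
          (integral_map hpairmeas hFmeas.aestronglyMeasurable).symm
      _ = ∫ p, F p ∂((Measure.map C μ).prod (gaussianReal 0 1)) := by rw [hpair]
      _ = ∫ c, (∫ w, F (c, w) ∂(gaussianReal 0 1)) ∂(Measure.map C μ) :=
          integral_prod F hFprod
      _ = ∫ c, (∫ w, G (c, w) ∂(gaussianReal 0 1)) ∂(Measure.map C μ) := by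
          refine integral_congr_ae ?_
          filter_upwards [hν] with c hc
          simpa only [hFdef, hGdef] using stein1d n hc
      _ = ∫ p, G p ∂((Measure.map C μ).prod (gaussianReal 0 1)) :=
          (integral_prod G hGprod).symm
      _ = ∫ p, G p ∂(Measure.map (fun ω => (C ω, Z i ω)) μ) := by rw [hpair]
      _ = ∫ ω, G (C ω, Z i ω) ∂μ := integral_map hpairmeas hGmeas.aestronglyMeasurable
      _ = ∫ ω, (((S ω) ^ (n+1))⁻¹ - 2 * ((n:ℝ)+1) * (Z i ω ^ 2 / S ω ^ (n+2))) ∂μ := by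
          rw [hGcomp]
          refine integral_congr_ae (Eventually.of_forall fun ω => ?_)
          ring
      _ = (∫ ω, ((S ω) ^ (n+1))⁻¹ ∂μ)
          - 2 * ((n:ℝ)+1) * ∫ ω, Z i ω ^ 2 / S ω ^ (n+2) ∂μ := by
          rw [integral_sub (hint (n+1) (by omega))
            ((hintZ i hi (n+2) (by omega) (by omega)).const_mul _),
            integral_const_mul]
  -- summed identities
  have hsum : ∀ m : ℕ, m ≤ 2 →
      ∑ i ∈ Finset.range k, ∫ ω, Z i ω ^ 2 / S ω ^ (m+1) ∂μ
        = ∫ ω, ((S ω) ^ m)⁻¹ ∂μ := by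
    intro m hm
    rw [← integral_finset_sum (Finset.range k)
      (fun i hi => hintZ i hi (m+1) (by omega) (by omega))]
    refine integral_congr_ae ?_
    filter_upwards [hSpos] with ω hS
    rw [← Finset.sum_div]
    have hsS : ∑ i ∈ Finset.range k, Z i ω ^ 2 = S ω := rfl
    rw [hsS, pow_succ]
    rw [div_eq_iff (by positivity)]
    field_simp
  have h0 : ∫ ω, ((S ω : ℝ) ^ 0)⁻¹ ∂μ = 1 := by simp
  have stein1 : ∀ i ∈ Finset.range k, ∫ ω, Z i ω ^ 2 / S ω ∂μ
      = (∫ ω, (S ω)⁻¹ ∂μ) - 2 * ∫ ω, Z i ω ^ 2 / S ω ^ 2 ∂μ := by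
    intro i hi
    have h := stein i hi 0 (by omega)
    norm_num at h
    exact h
  have stein2 : ∀ i ∈ Finset.range k, ∫ ω, Z i ω ^ 2 / S ω ^ 2 ∂μ
      = (∫ ω, ((S ω) ^ 2)⁻¹ ∂μ) - 4 * ∫ ω, Z i ω ^ 2 / S ω ^ 3 ∂μ := by
    intro i hi
    have h := stein i hi 1 (by omega)
    norm_num at h
    exact h
  have hsum1 : ∑ i ∈ Finset.range k, ∫ ω, Z i ω ^ 2 / S ω ∂μ = 1 := by
    have h := hsum 0 (by omega)
    norm_num at h
    exact h.trans (by simp)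
  have hsum2 : ∑ i ∈ Finset.range k, ∫ ω, Z i ω ^ 2 / S ω ^ 2 ∂μ
      = ∫ ω, (S ω)⁻¹ ∂μ := by
    have h := hsum 1 (by omega)
    norm_num at h
    exact h
  have hsum3 : ∑ i ∈ Finset.range k, ∫ ω, Z i ω ^ 2 / S ω ^ 3 ∂μ
      = ∫ ω, ((S ω) ^ 2)⁻¹ ∂μ := by
    have h := hsum 2 (by omega)
    norm_num at h
    exact h
  set I1 : ℝ := ∫ ω, (S ω)⁻¹ ∂μ with hI1def
  set I2 : ℝ := ∫ ω, ((S ω) ^ 2)⁻¹ ∂μ with hI2def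
  have e1 : (1:ℝ) = (k:ℝ) * I1 - 2 * I1 := by
    have hC : ∑ i ∈ Finset.range k, ∫ ω, Z i ω ^ 2 / S ω ∂μ
        = ∑ i ∈ Finset.range k, (I1 - 2 * ∫ ω, Z i ω ^ 2 / S ω ^ 2 ∂μ) :=
      Finset.sum_congr rfl fun i hi => stein1 i hi
    rw [hsum1, Finset.sum_sub_distrib, Finset.sum_const, Finset.card_range,
      ← Finset.mul_sum, hsum2, nsmul_eq_mul] at hC
    linarith
  have e2 : I1 = (k:ℝ) * I2 - 4 * I2 := by
    have hC : ∑ i ∈ Finset.range k, ∫ ω, Z i ω ^ 2 / S ω ^ 2 ∂μ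
        = ∑ i ∈ Finset.range k, (I2 - 4 * ∫ ω, Z i ω ^ 2 / S ω ^ 3 ∂μ) :=
      Finset.sum_congr rfl fun i hi => stein2 i hi
    rw [hsum2, Finset.sum_sub_distrib, Finset.sum_const, Finset.card_range,
      ← Finset.mul_sum, hsum3, nsmul_eq_mul] at hC
    linarith
  have hk2 : (k:ℝ) - 2 ≠ 0 := by linarith
  have hk4 : (k:ℝ) - 4 ≠ 0 := by linarith
  have hI1val : I1 = ((k:ℝ) - 2)⁻¹ := by
    refine eq_inv_of_mul_eq_one_right ?_
    linarith [e1]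
  have hI2val : I2 = (((k:ℝ) - 2) * ((k:ℝ) - 4))⁻¹ := by
    refine eq_inv_of_mul_eq_one_right ?_
    have h4 : ((k:ℝ) - 4) * I2 = I1 := by linarith
    calc ((k:ℝ) - 2) * ((k:ℝ) - 4) * I2
        = (((k:ℝ) - 4) * I2) * ((k:ℝ) - 2) := by ring
      _ = I1 * ((k:ℝ) - 2) := by rw [h4]
      _ = 1 := by linarith [e1]
  have hint1' : Integrable (fun ω => (S ω)⁻¹) μ := by
    have := hint 1 (by omega)
    simpa using this
  have hint2' : Integrable (fun ω => ((S ω) ^ 2)⁻¹) μ := hint 2 (by omega)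
  -- expectation of T and T²
  have hTae : T k =ᵐ[μ] fun ω =>
      Real.sqrt k / Real.sqrt 2 * (1 - (k:ℝ) * (S ω)⁻¹) := by
    filter_upwards [hSpos] with ω hS
    rw [hT k, hV k]
    have h2 : Real.sqrt 2 ≠ 0 := by positivity
    have hsk : (S ω : ℝ) ≠ 0 := hS.ne'
    have hkne : (k:ℝ) ≠ 0 := hx0.ne'
    show Real.sqrt k * ((1 / (k:ℝ)) * S ω - 1) / (Real.sqrt 2 * ((1 / (k:ℝ)) * S ω))
        = Real.sqrt k / Real.sqrt 2 * (1 - (k:ℝ) * (S ω)⁻¹)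
    field_simp
  have hsqk : (Real.sqrt k / Real.sqrt 2) ^ 2 = (k:ℝ) / 2 := by
    rw [div_pow, Real.sq_sqrt (by positivity : (0:ℝ) ≤ (k:ℝ)),
      Real.sq_sqrt (by norm_num : (0:ℝ) ≤ 2)]
  have hET : ∫ ω, T k ω ∂μ = Real.sqrt k / Real.sqrt 2 * (1 - (k:ℝ) * I1) := by
    rw [integral_congr_ae hTae, integral_const_mul]
    congr 1
    rw [integral_sub (integrable_const 1) ((hint1').const_mul _), integral_const,
      integral_const_mul]
    simp [hI1def]
  have hT2ae : (fun ω => T k ω ^ 2) =ᵐ[μ] fun ω =>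
      (k:ℝ)/2 * (1 - 2*(k:ℝ)*(S ω)⁻¹ + (k:ℝ)^2 * ((S ω) ^ 2)⁻¹) := by
    filter_upwards [hTae] with ω h
    rw [h, mul_pow, hsqk]
    have hip : ((S ω) ^ 2)⁻¹ = ((S ω)⁻¹) ^ 2 := (inv_pow _ 2).symm
    rw [hip]
    ring
  have hET2 : ∫ ω, T k ω ^ 2 ∂μ
      = (k:ℝ)/2 * (1 - 2*(k:ℝ)*I1 + (k:ℝ)^2 * I2) := by
    rw [integral_congr_ae hT2ae, integral_const_mul]
    congr 1
    have i1 : Integrable (fun ω => 1 - 2*(k:ℝ)*(S ω)⁻¹) μ :=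
      (integrable_const 1).sub (hint1'.const_mul _)
    rw [integral_add i1 (hint2'.const_mul _),
      integral_sub (integrable_const 1) (hint1'.const_mul _),
      integral_const, integral_const_mul, integral_const_mul]
    simp [hI1def, hI2def]
  rw [hET2, hET, hI1val, hI2val, mul_pow, hsqk]
  have hxne : (k:ℝ) ≠ 0 := hx0.ne'
  have key : (k:ℝ)/2 * (1 - 2*(k:ℝ)*((k:ℝ) - 2)⁻¹ + (k:ℝ)^2 * (((k:ℝ) - 2) * ((k:ℝ) - 4))⁻¹)
      - (k:ℝ)/2 * (1 - (k:ℝ)*((k:ℝ) - 2)⁻¹)^2 - 1 - 8/(k:ℝ)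
      = (44*(k:ℝ)^2 - 144*(k:ℝ) + 128) / ((k:ℝ) * ((k:ℝ) - 2)^2 * ((k:ℝ) - 4)) := by
    field_simp
    ring
  rw [key]
  have hNpos : (0:ℝ) < 44*(k:ℝ)^2 - 144*(k:ℝ) + 128 := by nlinarith
  have hDpos : (0:ℝ) < (k:ℝ) * ((k:ℝ) - 2)^2 * ((k:ℝ) - 4) :=
    mul_pos (mul_pos hx0 (pow_pos (by linarith : (0:ℝ) < (k:ℝ) - 2) 2))
      (by linarith : (0:ℝ) < (k:ℝ) - 4)
  rw [abs_of_pos (div_pos hNpos hDpos)]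
  have hD8 : (k:ℝ)^4 / 8 ≤ (k:ℝ) * ((k:ℝ) - 2)^2 * ((k:ℝ) - 4) := by
    calc (k:ℝ)^4/8 = (k:ℝ) * ((k:ℝ)/2)^2 * ((k:ℝ)/2) := by ring
      _ ≤ (k:ℝ) * ((k:ℝ) - 2)^2 * ((k:ℝ) - 4) := by gcongr <;> linarith
  have step1 : (44*(k:ℝ)^2 - 144*(k:ℝ) + 128) / ((k:ℝ) * ((k:ℝ) - 2)^2 * ((k:ℝ) - 4))
      ≤ (44*(k:ℝ)^2) / ((k:ℝ)^4 / 8) :=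
    div_le_div₀ (by positivity) (by nlinarith) (by positivity) hD8
  have step2 : (44*(k:ℝ)^2) / ((k:ℝ)^4 / 8) = 352 * ((k:ℝ)^2)⁻¹ := by
    field_simp
    ring
  have step3 : ((k:ℝ)^2)⁻¹ = (k:ℝ) ^ (-2 : ℝ) := by
    rw [show (-2:ℝ) = -((2:ℕ):ℝ) by norm_num, Real.rpow_neg hx0.le, Real.rpow_natCast]
  have step4 : (k:ℝ) ^ (-2 : ℝ) ≤ (k:ℝ) ^ (-(3:ℝ)/2) :=
    Real.rpow_le_rpow_of_exponent_le (by linarith) (by norm_num)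
  calc (44*(k:ℝ)^2 - 144*(k:ℝ) + 128) / ((k:ℝ) * ((k:ℝ) - 2)^2 * ((k:ℝ) - 4))
      ≤ (44*(k:ℝ)^2) / ((k:ℝ)^4 / 8) := step1
    _ = 352 * ((k:ℝ)^2)⁻¹ := step2
    _ = 352 * (k:ℝ) ^ (-2 : ℝ) := by rw [step3]
    _ ≤ 352 * (k:ℝ) ^ (-(3:ℝ)/2) := by linarith [step4]
end

section
/- Let α ∈ (0,1) and let z be the α-quantile of the standard normal distribution, i.e. Φ(z) = α. Suppose (T_k)_{k≥1} is a sequence of real random variables such that sup_{x∈ℝ} |P(T_k ≤ x) − Φ(x) − q_1(x)φ(x)/√k − q_2(x)φ(x)/k| = O(1/k) as k → ∞, where q_1(x) = √2 + (2√2/3)(x² − 1) and q_2(x) = −5x − (23/6)(x³ − 3x) + (4/9)(x⁵ − 10x³ + 15x). Then the Edgeworth-corrected one-sided coverage satisfies P(T_k ≥ z − q_1(z)/√k) = (1 − α) + O(1/k) as k → ∞. -/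
open MeasureTheory ProbabilityTheory Real Filter
open scoped ENNReal NNReal Topology
set_option maxHeartbeats 1000000

/-- The cumulative distribution function `Φ` of the standard normal distribution. -/
noncomputable def stdNormalCDF (x : ℝ) : ℝ :=
  ((gaussianReal 0 1) (Set.Iic x)).toReal

/-- The density `φ` of the standard normal distribution. -/
noncomputable def stdNormalPDF (x : ℝ) : ℝ :=
  gaussianPDFReal 0 1 x


section Helpers

lemma pdf_eq (x : ℝ) : stdNormalPDF x = (Real.sqrt (2 * π))⁻¹ * Real.exp (-(x ^ 2) / 2) := by
  simp [stdNormalPDF, gaussianPDFReal]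

lemma pdf_cont : Continuous stdNormalPDF := by
  simp only [funext pdf_eq]
  fun_prop

lemma pdf_nonneg (x : ℝ) : 0 ≤ stdNormalPDF x := gaussianPDFReal_nonneg 0 1 x

lemma sqrt_two_pi_ge_one : (1:ℝ) ≤ Real.sqrt (2 * π) := by
  rw [show (1:ℝ) = Real.sqrt 1 by simp]
  apply Real.sqrt_le_sqrt
  nlinarith [Real.pi_gt_three]

lemma pdf_le_one (x : ℝ) : stdNormalPDF x ≤ 1 := by
  rw [pdf_eq]
  have h1 := sqrt_two_pi_ge_one
  have h2 : Real.exp (-(x ^ 2) / 2) ≤ 1 := by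
    rw [Real.exp_le_one_iff]; nlinarith [sq_nonneg x]
  have h3 : (Real.sqrt (2*π))⁻¹ ≤ 1 := by
    rw [inv_le_one_iff₀]; right; exact h1
  nlinarith [Real.exp_nonneg (-(x^2)/2)]

lemma cdf_eq_integral (x : ℝ) : stdNormalCDF x = ∫ t in Set.Iic x, stdNormalPDF t := by
  rw [stdNormalCDF, gaussianReal_apply_eq_integral 0 one_ne_zero,
    ENNReal.toReal_ofReal]
  · rfl
  · exact setIntegral_nonneg measurableSet_Iic fun t _ => gaussianPDFReal_nonneg 0 1 t

lemma hasDerivAt_cdf (x : ℝ) : HasDerivAt stdNormalCDF (stdNormalPDF x) x := by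
  have hint : Integrable stdNormalPDF := integrable_gaussianPDFReal 0 1
  have key : ∀ y : ℝ, stdNormalCDF y = stdNormalCDF 0 + ∫ t in (0:ℝ)..y, stdNormalPDF t := by
    intro y
    rw [cdf_eq_integral, cdf_eq_integral,
      ← intervalIntegral.integral_Iic_sub_Iic hint.integrableOn hint.integrableOn]
    ring
  have h : HasDerivAt (fun y => stdNormalCDF 0 + ∫ t in (0:ℝ)..y, stdNormalPDF t)
      (stdNormalPDF x) x := by
    apply HasDerivAt.const_add
    exact intervalIntegral.integral_hasDerivAt_right hint.intervalIntegrable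
      pdf_cont.aestronglyMeasurable.stronglyMeasurableAtFilter pdf_cont.continuousAt
  exact h.congr_of_eventuallyEq (Eventually.of_forall key)

lemma cdf_cont : Continuous stdNormalCDF :=
  continuous_iff_continuousAt.2 fun x => (hasDerivAt_cdf x).continuousAt

lemma hasDerivAt_pdf (x : ℝ) : HasDerivAt stdNormalPDF (-x * stdNormalPDF x) x := by
  have h1 : HasDerivAt (fun y : ℝ => -(y ^ 2) / 2) (-x) x := by
    have := ((hasDerivAt_pow 2 x).neg).div_const 2
    simpa using this.congr_deriv (by ring)
  have h2 : HasDerivAt (fun y : ℝ => (Real.sqrt (2 * π))⁻¹ * Real.exp (-(y ^ 2) / 2))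
      ((Real.sqrt (2 * π))⁻¹ * (Real.exp (-(x ^ 2) / 2) * (-x))) x :=
    (h1.exp).const_mul _
  have h3 : HasDerivAt stdNormalPDF ((Real.sqrt (2 * π))⁻¹ * (Real.exp (-(x ^ 2) / 2) * (-x))) x := by
    apply h2.congr_of_eventuallyEq (Eventually.of_forall fun y => (pdf_eq y))
  convert h3 using 1
  rw [pdf_eq]; ring


lemma pdf_deriv_bound (x : ℝ) : |(-x) * stdNormalPDF x| ≤ 1 := by
  rw [pdf_eq, abs_mul, abs_neg, abs_mul, abs_of_nonneg (by positivity : (0:ℝ) ≤ (Real.sqrt (2*π))⁻¹),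
    abs_of_nonneg (Real.exp_nonneg _)]
  have h1 : |x| ≤ Real.exp (x ^ 2 / 2) := by
    have := Real.add_one_le_exp (x ^ 2 / 2)
    nlinarith [sq_nonneg (|x| - 1), sq_abs x]
  have h2 : Real.exp (-(x ^ 2) / 2) = (Real.exp (x ^ 2 / 2))⁻¹ := by
    rw [← Real.exp_neg]; ring_nf
  have h3 : (Real.sqrt (2*π))⁻¹ ≤ 1 := by
    rw [inv_le_one_iff₀]; right; exact sqrt_two_pi_ge_one
  rw [h2]
  have hpos : (0:ℝ) < Real.exp (x ^ 2 / 2) := Real.exp_pos _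
  have : |x| * (Real.exp (x ^ 2 / 2))⁻¹ ≤ 1 := by
    rw [mul_inv_le_iff₀ hpos, one_mul]; exact h1
  nlinarith [mul_le_mul h3 this (by positivity) (by positivity), abs_nonneg x,
    inv_nonneg.2 hpos.le, Real.sqrt_nonneg (2*π)]

lemma pdf_lipschitz (x y : ℝ) : |stdNormalPDF x - stdNormalPDF y| ≤ |x - y| := by
  have := Convex.norm_image_sub_le_of_norm_hasDerivWithin_le
    (f := stdNormalPDF) (f' := fun t => -t * stdNormalPDF t) (s := Set.univ)
    (fun t _ => (hasDerivAt_pdf t).hasDerivWithinAt)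
    (fun t _ => by rw [Real.norm_eq_abs]; exact pdf_deriv_bound t) convex_univ (Set.mem_univ y) (Set.mem_univ x)
  simpa [Real.norm_eq_abs, one_mul] using this

lemma cdf_taylor (z δ : ℝ) (hδ : 0 ≤ δ) :
    |stdNormalCDF z - stdNormalCDF (z - δ) - δ * stdNormalPDF z| ≤ δ ^ 2 := by
  set g : ℝ → ℝ := fun x => stdNormalCDF x - x * stdNormalPDF z with hg
  have hgd : ∀ x, HasDerivAt g (stdNormalPDF x - stdNormalPDF z) x := fun x =>
    (hasDerivAt_cdf x).sub (hasDerivAt_mul_const _)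
  have key := Convex.norm_image_sub_le_of_norm_hasDerivWithin_le
    (f := g) (f' := fun t => stdNormalPDF t - stdNormalPDF z) (s := Set.Icc (z - δ) z)
    (fun t _ => (hgd t).hasDerivWithinAt)
    (fun t ht => by
      have h1 := pdf_lipschitz t z
      have h2 : |t - z| ≤ δ := by
        rw [abs_le]; constructor <;> [linarith [ht.1]; linarith [ht.2]]
      simpa [Real.norm_eq_abs] using h1.trans h2)
    (convex_Icc _ _)
    (Set.mem_Icc.2 ⟨le_refl _, by linarith⟩)
    (Set.mem_Icc.2 ⟨by linarith, le_refl _⟩)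
  have hnorm : ‖z - (z - δ)‖ = δ := by rw [Real.norm_eq_abs]; rw [abs_of_nonneg] <;> [ring; linarith]
  rw [hnorm] at key
  have : g z - g (z - δ) = stdNormalCDF z - stdNormalCDF (z - δ) - δ * stdNormalPDF z := by
    simp only [hg]; ring
  rw [this, Real.norm_eq_abs] at key
  calc |stdNormalCDF z - stdNormalCDF (z - δ) - δ * stdNormalPDF z| ≤ δ * δ := key
    _ = δ ^ 2 := by ring

end Helpers

/-- If `Φ(z) = α` and `(T_k)` admits a uniform second-order Edgeworth
expansion with remainder `O(1/k)`, then the Edgeworth-corrected one-sided coverage satisfies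
`P(T_k ≥ z − q₁(z)/√k) = (1 − α) + O(1/k)` as `k → ∞`. -/
theorem corrected_one_sided_coverage
    {Ω : Type*} [MeasurableSpace Ω] (μ : Measure Ω) [IsProbabilityMeasure μ]
    (T : ℕ → Ω → ℝ) (hmeas : ∀ k, Measurable (T k))
    (q₁ q₂ : ℝ → ℝ)
    (hq₁ : ∀ y, q₁ y = Real.sqrt 2 + (2 * Real.sqrt 2 / 3) * (y ^ 2 - 1))
    (hq₂ : ∀ y, q₂ y = -5 * y - (23 / 6) * (y ^ 3 - 3 * y)
        + (4 / 9) * (y ^ 5 - 10 * y ^ 3 + 15 * y))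
    (hEdge : ∃ C > (0 : ℝ), ∃ K : ℕ, ∀ k : ℕ, K ≤ k → ∀ x : ℝ,
        |(μ {ω | T k ω ≤ x}).toReal
            - (stdNormalCDF x + q₁ x * stdNormalPDF x / Real.sqrt k
                + q₂ x * stdNormalPDF x / (k : ℝ))| ≤ C / (k : ℝ))
    (α : ℝ) (hα : α ∈ Set.Ioo (0 : ℝ) 1)
    (z : ℝ) (hz : stdNormalCDF z = α) :
    (fun k : ℕ => (μ {ω | z - q₁ z / Real.sqrt k ≤ T k ω}).toReal - (1 - α))
      =O[atTop] fun k : ℕ => 1 / (k : ℝ) := by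
  obtain ⟨C, hC, K, hK⟩ := hEdge
  have hs2 : (0:ℝ) < Real.sqrt 2 := Real.sqrt_pos.2 two_pos
  have hq1pos : 0 < q₁ z := by
    rw [hq₁]; nlinarith [sq_nonneg z, mul_nonneg hs2.le (sq_nonneg z)]
  -- continuity of q₁, q₂ and the Edgeworth function
  have hq₁c : Continuous q₁ := by
    rw [show q₁ = fun y => Real.sqrt 2 + (2 * Real.sqrt 2 / 3) * (y ^ 2 - 1) from funext hq₁]
    fun_prop
  have hq₂c : Continuous q₂ := by
    rw [show q₂ = fun y => -5 * y - (23 / 6) * (y ^ 3 - 3 * y)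
        + (4 / 9) * (y ^ 5 - 10 * y ^ 3 + 15 * y) from funext hq₂]
    fun_prop
  -- constants
  set B : ℝ := |z| + 1 with hB
  set L : ℝ := 2 * Real.sqrt 2 / 3 * (2 * |z| + 1) + |q₁ z| with hL
  set M : ℝ := 79/6*B + 149/18*B^3 + 4/9*B^5 with hM
  set D : ℝ := (q₁ z)^2 + L * q₁ z + M with hD
  have hLpos : 0 ≤ L := by positivity
  rw [Asymptotics.isBigO_iff]
  refine ⟨C + D, eventually_atTop.2 ⟨max (max K 1) (⌈(q₁ z)^2⌉₊ + 1), fun k hk => ?_⟩⟩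
  have hkK : K ≤ k := le_trans (le_trans (le_max_left _ _) (le_max_left _ _)) hk
  have hk1 : 1 ≤ k := le_trans (le_trans (le_max_right _ _) (le_max_left _ _)) hk
  have hkpos : (0:ℝ) < k := by exact_mod_cast Nat.lt_of_lt_of_le Nat.zero_lt_one hk1
  have hkq : (q₁ z)^2 ≤ (k:ℝ) := by
    have h1 : (⌈(q₁ z)^2⌉₊ : ℝ) ≤ k := by
      exact_mod_cast le_trans (Nat.le_succ _) (le_trans (le_max_right _ _) hk)
    exact le_trans (Nat.le_ceil _) h1
  set sk : ℝ := Real.sqrt k with hsk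
  have hskpos : 0 < sk := Real.sqrt_pos.2 hkpos
  have hsk2 : sk ^ 2 = (k:ℝ) := Real.sq_sqrt hkpos.le
  have hqsk : q₁ z ≤ sk := by
    rw [hsk, show q₁ z = Real.sqrt ((q₁ z)^2) from (Real.sqrt_sq hq1pos.le).symm]
    exact Real.sqrt_le_sqrt hkq
  set δ : ℝ := q₁ z / sk with hδ
  have hδ0 : 0 ≤ δ := by positivity
  have hδ1 : δ ≤ 1 := by rw [hδ, div_le_one hskpos]; exact hqsk
  set x₀ : ℝ := z - δ with hx₀
  set E : ℝ → ℝ := fun x => stdNormalCDF x + q₁ x * stdNormalPDF x / sk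
      + q₂ x * stdNormalPDF x / (k:ℝ) with hE
  have hEcont : Continuous E :=
    ((cdf_cont.add ((hq₁c.mul pdf_cont).div_const _)).add ((hq₂c.mul pdf_cont).div_const _))
  have hEdg : ∀ x : ℝ, |(μ {ω | T k ω ≤ x}).toReal - E x| ≤ C / k := fun x => hK k hkK x
  set b : ℝ := (μ {ω | x₀ ≤ T k ω}).toReal with hb
  have hbmeas : MeasurableSet {ω | x₀ ≤ T k ω} := (hmeas k) measurableSet_Ici
  -- lower bound for b
  have hlow : 1 - E x₀ - C / k ≤ b := by
    have hunion : {ω | T k ω ≤ x₀} ∪ {ω | x₀ ≤ T k ω} = Set.univ := by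
      ext ω; simpa using le_total (T k ω) x₀
    have h1 : (1:ℝ≥0∞) ≤ μ {ω | T k ω ≤ x₀} + μ {ω | x₀ ≤ T k ω} := by
      calc (1:ℝ≥0∞) = μ Set.univ := (measure_univ).symm
        _ = μ ({ω | T k ω ≤ x₀} ∪ {ω | x₀ ≤ T k ω}) := by rw [hunion]
        _ ≤ _ := measure_union_le _ _
    have h2 := ENNReal.toReal_mono
      (ENNReal.add_ne_top.2 ⟨measure_ne_top _ _, measure_ne_top _ _⟩) h1
    rw [ENNReal.toReal_one, ENNReal.toReal_add (measure_ne_top _ _) (measure_ne_top _ _)] at h2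
    have h3 := (abs_le.1 (hEdg x₀)).2
    linarith
  -- upper bound for b via ε → 0
  have hupp : b ≤ 1 - E x₀ + C / k := by
    have hlim : Tendsto (fun n : ℕ => 1 - E (x₀ - 1/(n+1)) + C/k) atTop
        (𝓝 (1 - E x₀ + C/k)) := by
      have h0 : Tendsto (fun n : ℕ => x₀ - 1/((n:ℝ)+1)) atTop (𝓝 x₀) := by
        have := tendsto_one_div_add_atTop_nhds_zero_nat (𝕜 := ℝ)
        simpa using tendsto_const_nhds.sub this
      have h1 : Tendsto (fun n : ℕ => E (x₀ - 1/((n:ℝ)+1))) atTop (𝓝 (E x₀)) :=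
        (hEcont.tendsto x₀).comp h0
      simpa using (tendsto_const_nhds.sub h1).add tendsto_const_nhds
    refine ge_of_tendsto hlim (Eventually.of_forall fun n => ?_)
    set ε : ℝ := 1/((n:ℝ)+1) with hε
    have hεpos : 0 < ε := by positivity
    have hdisj : Disjoint {ω | T k ω ≤ x₀ - ε} {ω | x₀ ≤ T k ω} := by
      rw [Set.disjoint_left]
      intro ω h1 h2
      simp only [Set.mem_setOf_eq] at h1 h2
      linarith
    have hle : μ {ω | T k ω ≤ x₀ - ε} + μ {ω | x₀ ≤ T k ω} ≤ 1 := by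
      rw [← measure_union hdisj hbmeas]
      exact prob_le_one
    have h2 := ENNReal.toReal_mono ENNReal.one_ne_top hle
    rw [ENNReal.toReal_one, ENNReal.toReal_add (measure_ne_top _ _) (measure_ne_top _ _)] at h2
    have h3 := (abs_le.1 (hEdg (x₀ - ε))).1
    linarith
  have habs1 : |b - (1 - E x₀)| ≤ C / k := abs_le.2 ⟨by linarith, by linarith⟩
  -- analytic part
  have habs2 : |E x₀ - α| ≤ D / k := by
    have t1 : |stdNormalCDF x₀ - stdNormalCDF z + δ * stdNormalPDF z| ≤ δ ^ 2 := by
      have := cdf_taylor z δ hδ0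
      rw [← hx₀] at this
      calc |stdNormalCDF x₀ - stdNormalCDF z + δ * stdNormalPDF z|
          = |stdNormalCDF z - stdNormalCDF x₀ - δ * stdNormalPDF z| := by
            rw [← abs_neg]; ring_nf
        _ ≤ δ ^ 2 := this
    have hx₀z : |x₀ - z| = δ := by rw [hx₀]; simp [abs_of_nonneg hδ0]
    have t2 : |q₁ x₀ * stdNormalPDF x₀ - q₁ z * stdNormalPDF z| ≤ L * δ := by
      have e1 : q₁ x₀ - q₁ z = 2 * Real.sqrt 2 / 3 * ((x₀ - z) * (x₀ + z)) := by
        rw [hq₁, hq₁]; ring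
      have e2 : |q₁ x₀ - q₁ z| ≤ 2 * Real.sqrt 2 / 3 * ((2*|z| + 1) * δ) := by
        rw [e1, abs_mul, abs_mul, abs_of_nonneg (by positivity : (0:ℝ) ≤ 2 * Real.sqrt 2 / 3),
          hx₀z]
        have h4 : |x₀ + z| ≤ 2*|z| + 1 := by
          rw [hx₀]
          calc |z - δ + z| = |2*z - δ| := by ring_nf
            _ ≤ |2*z| + |δ| := abs_sub _ _
            _ ≤ 2*|z| + 1 := by rw [abs_mul, abs_of_nonneg hδ0]; simp; linarith
        have h5 : δ * |x₀ + z| ≤ (2*|z| + 1) * δ := by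
          nlinarith [mul_le_mul_of_nonneg_left h4 hδ0]
        exact mul_le_mul_of_nonneg_left h5 (by positivity)
      have split : q₁ x₀ * stdNormalPDF x₀ - q₁ z * stdNormalPDF z
          = (q₁ x₀ - q₁ z) * stdNormalPDF x₀ + q₁ z * (stdNormalPDF x₀ - stdNormalPDF z) := by
        ring
      have hpd := pdf_lipschitz x₀ z
      rw [hx₀z] at hpd
      calc |q₁ x₀ * stdNormalPDF x₀ - q₁ z * stdNormalPDF z|
          ≤ |(q₁ x₀ - q₁ z) * stdNormalPDF x₀| + |q₁ z * (stdNormalPDF x₀ - stdNormalPDF z)| := by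
            rw [split]; exact abs_add_le _ _
        _ = |q₁ x₀ - q₁ z| * |stdNormalPDF x₀| + |q₁ z| * |stdNormalPDF x₀ - stdNormalPDF z| := by
            rw [abs_mul, abs_mul]
        _ ≤ (2 * Real.sqrt 2 / 3 * ((2*|z| + 1) * δ)) * 1 + |q₁ z| * δ := by
            have hpdf1 : |stdNormalPDF x₀| ≤ 1 := by
              rw [abs_of_nonneg (pdf_nonneg x₀)]; exact pdf_le_one x₀
            exact add_le_add
              (mul_le_mul e2 hpdf1 (abs_nonneg _)
                (mul_nonneg (by positivity) (mul_nonneg (by positivity) hδ0)))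
              (mul_le_mul_of_nonneg_left hpd (abs_nonneg _))
        _ = L * δ := by rw [hL]; ring
    have t3 : |q₂ x₀ * stdNormalPDF x₀| ≤ M := by
      have hx₀B : |x₀| ≤ B := by
        rw [hx₀, hB]
        calc |z - δ| ≤ |z| + |δ| := abs_sub _ _
          _ ≤ |z| + 1 := by rw [abs_of_nonneg hδ0]; linarith
      have e3 : q₂ x₀ = 79/6*x₀ + (-(149/18))*x₀^3 + 4/9*x₀^5 := by rw [hq₂]; ring
      have e4 : |q₂ x₀| ≤ 79/6*|x₀| + 149/18*|x₀|^3 + 4/9*|x₀|^5 := by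
        rw [e3]
        calc |79/6*x₀ + (-(149/18))*x₀^3 + 4/9*x₀^5|
            ≤ |79/6*x₀ + (-(149/18))*x₀^3| + |4/9*x₀^5| := abs_add_le _ _
          _ ≤ |79/6*x₀| + |(-(149/18))*x₀^3| + |4/9*x₀^5| := by
              gcongr; exact abs_add_le _ _
          _ = 79/6*|x₀| + 149/18*|x₀|^3 + 4/9*|x₀|^5 := by
              rw [abs_mul, abs_mul, abs_mul, abs_pow, abs_pow, abs_neg,
                abs_of_nonneg (show (0:ℝ) ≤ 79/6 by norm_num),
                abs_of_nonneg (show (0:ℝ) ≤ 149/18 by norm_num),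
                abs_of_nonneg (show (0:ℝ) ≤ 4/9 by norm_num)]
      have e5 : |q₂ x₀| ≤ M := by
        rw [hM]
        calc |q₂ x₀| ≤ 79/6*|x₀| + 149/18*|x₀|^3 + 4/9*|x₀|^5 := e4
          _ ≤ 79/6*B + 149/18*B^3 + 4/9*B^5 := by gcongr <;> exact abs_nonneg _
      have hpdf1 : |stdNormalPDF x₀| ≤ 1 := by
        rw [abs_of_nonneg (pdf_nonneg x₀)]; exact pdf_le_one x₀
      have hMpos : 0 ≤ M := le_trans (abs_nonneg _) e5
      calc |q₂ x₀ * stdNormalPDF x₀| = |q₂ x₀| * |stdNormalPDF x₀| := abs_mul _ _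
        _ ≤ M * 1 := mul_le_mul e5 hpdf1 (abs_nonneg _) hMpos
        _ = M := mul_one M
    have hdec : E x₀ - α = (stdNormalCDF x₀ - stdNormalCDF z + δ * stdNormalPDF z)
        + (q₁ x₀ * stdNormalPDF x₀ - q₁ z * stdNormalPDF z) / sk
        + q₂ x₀ * stdNormalPDF x₀ / (k:ℝ) := by
      rw [hE, ← hz]
      have : δ * stdNormalPDF z = q₁ z * stdNormalPDF z / sk := by
        rw [hδ]; field_simp
      rw [this]; ring
    have hd2 : δ ^ 2 = (q₁ z)^2 / k := by
      rw [hδ, div_pow, hsk2]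
    rw [hdec, hD]
    have hterm2 : |(q₁ x₀ * stdNormalPDF x₀ - q₁ z * stdNormalPDF z) / sk| ≤ L * q₁ z / k := by
      rw [abs_div, abs_of_nonneg hskpos.le, div_le_iff₀ hskpos]
      have heq : L * q₁ z / (k:ℝ) * sk = L * δ := by
        rw [hδ, ← hsk2]; field_simp
      rw [heq]; exact t2
    have hterm3 : |q₂ x₀ * stdNormalPDF x₀ / (k:ℝ)| ≤ M / k := by
      rw [abs_div, abs_of_nonneg hkpos.le]
      gcongr
    calc |stdNormalCDF x₀ - stdNormalCDF z + δ * stdNormalPDF z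
          + (q₁ x₀ * stdNormalPDF x₀ - q₁ z * stdNormalPDF z) / sk
          + q₂ x₀ * stdNormalPDF x₀ / (k:ℝ)|
        ≤ |stdNormalCDF x₀ - stdNormalCDF z + δ * stdNormalPDF z
          + (q₁ x₀ * stdNormalPDF x₀ - q₁ z * stdNormalPDF z) / sk|
          + |q₂ x₀ * stdNormalPDF x₀ / (k:ℝ)| := abs_add_le _ _
      _ ≤ |stdNormalCDF x₀ - stdNormalCDF z + δ * stdNormalPDF z|
          + |(q₁ x₀ * stdNormalPDF x₀ - q₁ z * stdNormalPDF z) / sk|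
          + |q₂ x₀ * stdNormalPDF x₀ / (k:ℝ)| := by gcongr; exact abs_add_le _ _
      _ ≤ δ ^ 2 + L * q₁ z / k + M / k := add_le_add (add_le_add t1 hterm2) hterm3
      _ = (q₁ z ^ 2 + L * q₁ z + M) / (k:ℝ) := by rw [hd2]; ring
  -- final assembly
  have hnn : (0:ℝ) ≤ 1/(k:ℝ) := by positivity
  rw [Real.norm_eq_abs, Real.norm_eq_abs, abs_of_nonneg hnn]
  have habs2' : |α - E x₀| ≤ D / k := by rw [abs_sub_comm]; exact habs2
  have hsplit : b - (1 - α) = (b - (1 - E x₀)) + (α - E x₀) := by ring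
  calc |b - (1 - α)| = |(b - (1 - E x₀)) + (α - E x₀)| := by rw [hsplit]
    _ ≤ |b - (1 - E x₀)| + |α - E x₀| := abs_add_le _ _
    _ ≤ C / k + D / k := add_le_add habs1 habs2'
    _ = (C + D) * (1/(k:ℝ)) := by ring
end
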